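/- Let μ ∈ {μ₁, μ₂}, let V := X⊗ℝ, and for x ∈ V let c(x) := x_1 + x_{2n} (the common value of x_i + x_{i*}). If n is odd, then Conv(W°μ) = { x ∈ V : 0 ≤ x_j ≤ 1 for all j, c(x) = 1, and Σ_j μ'(j)x_j ≥ 1 for all μ' ∈ W°μ }. If n is even, then Conv(W°μ) = { x ∈ V : 0 ≤ x_j ≤ 1 for all j, c(x) = 1, and Σ_j μ'(j)x_j ≥ 1 for all μ' ∈ τW°μ }, where τ := (n, n+1) ∈ S^h_{2n} (so that τW°μ₁ = W°μ₂ and τW°μ₂ = W°μ₁). -/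

import Mathlib

open Finset

namespace OrthLM

/-- Membership in the cocharacter lattice `X` of the standard maximal torus of `GO_{2n}`:
integer vectors with `r_i + r_{i*}` independent of `i`. -/
def inX (n : ℕ) (v : Fin (2*n) → ℤ) : Prop :=
  ∀ i j : Fin (2*n), v i + v i.rev = v j + v j.rev

/-- Membership in `S^h_{2n}`: permutations commuting with the involution `i ↦ i* = 2n+1-i`. -/
def inSh (n : ℕ) (σ : Equiv.Perm (Fin (2*n))) : Prop :=
  ∀ i, σ i.rev = (σ i).rev

/-- Membership in `W°`: elements of `S^h_{2n}` that are even as permutations. -/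
def inW0 (n : ℕ) (σ : Equiv.Perm (Fin (2*n))) : Prop :=
  inSh n σ ∧ Equiv.Perm.sign σ = 1

/-- Elements of the ambient group of the Iwahori-Weyl group `W̃ = X ⋊ S^h_{2n}`,
represented as pairs (translation part, finite part). -/
abbrev Wt (n : ℕ) := (Fin (2*n) → ℤ) × Equiv.Perm (Fin (2*n))

/-- Membership in the Iwahori-Weyl group `W̃ = X ⋊ S^h_{2n}`. -/
def inWt (n : ℕ) (w : Wt n) : Prop := inX n w.1 ∧ inSh n w.2

def wone (n : ℕ) : Wt n := (0, 1)

/-- Multiplication in `W̃` (compatible with the affine action `(v,σ)·x = v + σx`). -/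
def wmul (n : ℕ) (w w' : Wt n) : Wt n :=
  (fun i => w.1 i + w'.1 (w.2⁻¹ i), w.2 * w'.2)

/-- Inversion in `W̃`. -/
def winv (n : ℕ) (w : Wt n) : Wt n := (fun i => -(w.1 (w.2 i)), w.2⁻¹)

/-- The translation element `t_μ`. -/
def wtrans (n : ℕ) (μ : Fin (2*n) → ℤ) : Wt n := (μ, 1)

/-- A finite Weyl group element regarded in `W̃`. -/
def wperm (n : ℕ) (σ : Equiv.Perm (Fin (2*n))) : Wt n := (0, σ)

/-- The affine action of `W̃` on `ℤ^{2n}`: `(v,σ)·x = v + σx` with `(σx)(i) = x(σ⁻¹ i)`. -/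
def wact (n : ℕ) (w : Wt n) (x : Fin (2*n) → ℤ) : Fin (2*n) → ℤ :=
  fun i => w.1 i + x (w.2⁻¹ i)

/-- The affine action of `W̃` on `ℝ^{2n}`. -/
def wactR (n : ℕ) (w : Wt n) (x : Fin (2*n) → ℝ) : Fin (2*n) → ℝ :=
  fun i => (w.1 i : ℝ) + x (w.2⁻¹ i)

/-- The action of a permutation on vectors: `(σμ)(i) = μ(σ⁻¹ i)`. -/
def permAct (n : ℕ) (σ : Equiv.Perm (Fin (2*n))) (μ : Fin (2*n) → ℤ) : Fin (2*n) → ℤ :=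
  fun i => μ (σ⁻¹ i)

/-- The cocharacter `μ₁ = (1^{(n)}, 0^{(n)})`. -/
def mu1 (n : ℕ) : Fin (2*n) → ℤ := fun j => if (j:ℕ) < n then 1 else 0

/-- The cocharacter `μ₂ = (1^{(n-1)}, 0, 1, 0^{(n-1)})`. -/
def mu2 (n : ℕ) : Fin (2*n) → ℤ := fun j => if (j:ℕ) < n - 1 ∨ (j:ℕ) = n then 1 else 0

/-- The vertices `ω_k = ((-1)^{(k)}, 0^{(2n-k)})` of the standard extended alcove. -/
def om (n : ℕ) (k : ℕ) : Fin (2*n) → ℤ := fun j => if (j:ℕ) < k then -1 else 0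

/-- The extended alcove `v_k = w·ω_k` of `w`. -/
def valc (n : ℕ) (w : Wt n) (k : ℕ) : Fin (2*n) → ℤ := wact n w (om n k)

/-- The vector `μ_k^w = v_k - ω_k`. -/
def muk (n : ℕ) (w : Wt n) (k : ℕ) : Fin (2*n) → ℤ :=
  fun j => valc n w k j - om n k j

/-- The set `E_k^w = {j : μ_k^w(j) = 0}`. -/
def Ew (n : ℕ) (w : Wt n) (k : ℕ) : Finset (Fin (2*n)) :=
  univ.filter fun j => muk n w k j = 0

/-- `GL`-permissibility: `Σ v_0 = n` and `ω_k ≤ v_k ≤ ω_k + (1,…,1)` for `0 ≤ k ≤ 2n-1`. -/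
def GLperm (n : ℕ) (w : Wt n) : Prop :=
  (∑ j, valc n w 0 j) = (n : ℤ) ∧
  ∀ k < 2*n, ∀ j, om n k j ≤ valc n w k j ∧ valc n w k j ≤ om n k j + 1

/-- A vector `μ ∈ {0,1}^{2n}` is totally isotropic if `μ(j) + μ(j*) = 1` for all `j`. -/
def TotIso (n : ℕ) (μ : Fin (2*n) → ℤ) : Prop := ∀ j, μ j + μ j.rev = 1

/-- `μ`-spin-permissibility: `GL`-permissible and every totally isotropic `μ_k^w`
(for `0 ≤ k ≤ n`) lies in the `W°`-orbit of `μ`. -/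
def SpinPerm (n : ℕ) (μ : Fin (2*n) → ℤ) (w : Wt n) : Prop :=
  GLperm n w ∧ ∀ k ≤ n, TotIso n (muk n w k) →
    ∃ σ, inW0 n σ ∧ muk n w k = permAct n σ μ

/-- Membership in the coroot lattice `Q^∨`. -/
def inQv (n : ℕ) (v : Fin (2*n) → ℤ) : Prop :=
  inX n v ∧ (∀ i, v i + v i.rev = 0) ∧
  Even (∑ i ∈ univ.filter (fun i : Fin (2*n) => (i:ℕ) < n), v i)

/-- Membership in the affine Weyl group `W_a = Q^∨ ⋊ W°`. -/
def inWa (n : ℕ) (x : Wt n) : Prop := inQv n x.1 ∧ inW0 n x.2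

/-- The affine reflection `s_{i,j;d}` (for `j ∉ {i, i*}`), sending `x` to the vector with
`x_j + d` in slot `i`, `x_i - d` in slot `j`, `x_{i*} + d` in slot `j*`, `x_{j*} - d` in
slot `i*`. -/
def wrefl (n : ℕ) (i j : Fin (2*n)) (d : ℤ) : Wt n :=
  (fun l => if l = i then d else if l = j then -d else if l = j.rev then d
            else if l = i.rev then -d else 0,
   Equiv.swap i j * Equiv.swap i.rev j.rev)

/-- Successor modulo `2n` on representatives `{0,…,2n-1}` of `ℤ/2nℤ`. -/
def csucc (n : ℕ) (k : Fin (2*n)) : Fin (2*n) :=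
  ⟨((k:ℕ) + 1) % (2*n), Nat.mod_lt _ k.pos⟩

/-- Predecessor modulo `2n`. -/
def cpred (n : ℕ) (k : Fin (2*n)) : Fin (2*n) :=
  ⟨((k:ℕ) + (2*n - 1)) % (2*n), Nat.mod_lt _ k.pos⟩

/-- Negation modulo `2n`. -/
def cneg (n : ℕ) (k : Fin (2*n)) : Fin (2*n) :=
  ⟨(2*n - (k:ℕ)) % (2*n), Nat.mod_lt _ k.pos⟩

/-- The star involution on classes mod `2n`: the class of `m` goes to the class of
`m* = 2n+1-m`, i.e. `c ↦ 1 - c`. -/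
def cstar (n : ℕ) (k : Fin (2*n)) : Fin (2*n) := csucc n (cneg n k)

/-- The representative in `{1,…,2n}` of a class mod `2n`. -/
def pv (n : ℕ) (k : Fin (2*n)) : ℕ := if (k:ℕ) = 0 then 2*n else (k:ℕ)

/-- The cyclic interval `[a, b)` in `ℤ/2nℤ`. -/
def cyc (n : ℕ) (a b : Fin (2*n)) : Finset (Fin (2*n)) :=
  univ.filter fun k => ((k:ℕ) + 2*n - (a:ℕ)) % (2*n) < ((b:ℕ) + 2*n - (a:ℕ)) % (2*n)

/-- The set `K_m = {k ∈ ℤ/2nℤ : μ_k^w(m) = 0}` (indices `m` are 0-indexed: the slot `m`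
corresponds to the paper's `m+1 ∈ {1,…,2n}`; classes are represented by `{0,…,2n-1}`). -/
def Kset (n : ℕ) (w : Wt n) (m : Fin (2*n)) : Finset (Fin (2*n)) :=
  univ.filter fun k => muk n w (k:ℕ) m = 0

/-- The slot `m` is proper: `K_{m+1}` (paper indexing) is a cyclic interval `[m̃, m+1)`
with lower endpoint `m̃` different from the class of `m+1`. -/
def isProper (n : ℕ) (w : Wt n) (m : Fin (2*n)) : Prop :=
  ∃ mt, mt ≠ csucc n m ∧ Kset n w m = cyc n mt (csucc n m)

/-- The constraint cutting out `X ⊗ ℝ` inside `ℝ^{2n}`. -/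
def inXR (n : ℕ) (x : Fin (2*n) → ℝ) : Prop :=
  ∀ i j : Fin (2*n), x i + x i.rev = x j + x j.rev

/-- The closure (in `X ⊗ ℝ`, lifted to `ℝ^{2n}`) of the preimage `Ã` of the base alcove:
the points of `X ⊗ ℝ` on which every positive root `x_i - x_j`, `x_i + x_j - c(x)`
(`1 ≤ i < j ≤ n`) takes values in `[-1, 0]`. -/
def ClA (n : ℕ) : Set (Fin (2*n) → ℝ) :=
  {x | inXR n x ∧
       ∀ i j : Fin (2*n), i < j → (j:ℕ) < n →
         (-1 ≤ x i - x j ∧ x i - x j ≤ 0 ∧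
          -1 ≤ x i + x j - (x i + x i.rev) ∧ x i + x j - (x i + x i.rev) ≤ 0)}

/-- The stabilizer `Ω` in `W̃` of the base alcove. -/
def inOmega (n : ℕ) (w : Wt n) : Prop :=
  inWt n w ∧ (wactR n w) '' ClA n = ClA n

/-- The Coxeter generators of `W_a`: the reflections in the walls of the base alcove,
namely `s_{i,i+1;0}` for `1 ≤ i ≤ n-1`, `s_{n-1,n+1;0}`, and `s_{1,2n-1;-1}`
(paper 1-indexed; here 0-indexed). -/
def sgens (n : ℕ) (hn : 2 ≤ n) : Set (Wt n) :=
  {w | (∃ i : Fin (2*n), (i:ℕ) + 1 < n ∧ w = wrefl n i (csucc n i) 0) ∨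
       w = wrefl n ⟨n-2, by omega⟩ ⟨n, by omega⟩ 0 ∨
       w = wrefl n ⟨0, by omega⟩ ⟨2*n-2, by omega⟩ (-1)}

def wprod (n : ℕ) (L : List (Wt n)) : Wt n := L.foldr (wmul n) (wone n)

/-- A word in the Coxeter generators of `W_a`. -/
def isWord (n : ℕ) (hn : 2 ≤ n) (L : List (Wt n)) : Prop := ∀ s ∈ L, s ∈ sgens n hn

/-- The length function on `W̃`: `ℓ(xω) = ℓ(x)` for `x ∈ W_a`, `ω ∈ Ω`, where `ℓ(x)` is
the minimal length of a word in the Coxeter generators expressing `x`. -/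
noncomputable def lenW (n : ℕ) (hn : 2 ≤ n) (w : Wt n) : ℕ :=
  sInf {m | ∃ L ω, isWord n hn L ∧ L.length = m ∧ inOmega n ω ∧ w = wmul n (wprod n L) ω}

/-- The Bruhat order on `W̃`: `xω ≤ x'ω'` iff `ω = ω'` and `x ≤ x'` in `W_a`, the latter
expressed by the subword property for a reduced word of `x'`. -/
def wle (n : ℕ) (hn : 2 ≤ n) (w w' : Wt n) : Prop :=
  ∃ L ω, isWord n hn L ∧ inOmega n ω ∧ w' = wmul n (wprod n L) ω ∧
    L.length = lenW n hn w' ∧ ∃ L', L'.Sublist L ∧ w = wmul n (wprod n L') ω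

/-- Strict Bruhat order on `W̃`. -/
def wlt (n : ℕ) (hn : 2 ≤ n) (w w' : Wt n) : Prop := wle n hn w w' ∧ w ≠ w'

/-- The `μ`-admissible set `Adm°(μ)` for `G°`: `w ≤ σ t_μ σ⁻¹` for some `σ ∈ W°`. -/
def AdmO (n : ℕ) (hn : 2 ≤ n) (μ : Fin (2*n) → ℤ) (w : Wt n) : Prop :=
  ∃ σ, inW0 n σ ∧
    wle n hn w (wmul n (wperm n σ) (wmul n (wtrans n μ) (wperm n σ⁻¹)))

/-- The `μ`-admissible set `Adm(μ)` for `G`: `w ≤ σ t_μ σ⁻¹` for some `σ ∈ S^h_{2n}`. -/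
def AdmFull (n : ℕ) (hn : 2 ≤ n) (μ : Fin (2*n) → ℤ) (w : Wt n) : Prop :=
  ∃ σ, inSh n σ ∧
    wle n hn w (wmul n (wperm n σ) (wmul n (wtrans n μ) (wperm n σ⁻¹)))

/-- The element `τ = (n, n+1) ∈ S^h_{2n}` (paper 1-indexed). -/
def tau (n : ℕ) (hn : 2 ≤ n) : Equiv.Perm (Fin (2*n)) :=
  Equiv.swap ⟨n-1, by omega⟩ ⟨n, by omega⟩


def Iso01 (n : ℕ) (y : Fin (2*n) → ℤ) : Prop :=
  (∀ j, y j = 0 ∨ y j = 1) ∧ ∀ j, y j + y j.rev = 1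

def zB (n : ℕ) (y : Fin (2*n) → ℤ) : ℕ :=
  (univ.filter fun j : Fin (2*n) => (j:ℕ) < n ∧ y j = 0).card

def Ocl (n : ℕ) (c : ZMod 2) : Set (Fin (2*n) → ℤ) :=
  {y | Iso01 n y ∧ (zB n y : ZMod 2) = c}

variable {n : ℕ}

lemma rev_val (j : Fin (2*n)) : (j.rev : ℕ) = 2*n - (j+1) := Fin.val_rev j

lemma rev_lt_iff (j : Fin (2*n)) : ((j.rev : ℕ) < n) ↔ ¬ ((j:ℕ) < n) := by
  have := j.isLt; rw [rev_val]; omega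

lemma rev_ne (j : Fin (2*n)) : j.rev ≠ j := by
  intro h
  have := congrArg Fin.val h
  rw [rev_val] at this
  have := j.isLt
  omega

lemma inSh_inv {σ : Equiv.Perm (Fin (2*n))} (h : inSh n σ) : inSh n σ⁻¹ := by
  intro i
  have := h (σ⁻¹ i)
  have h2 : σ (σ⁻¹ i) = i := (fun x => σ.apply_symm_apply x : ∀ x, σ (σ⁻¹ x) = x) i
  rw [h2] at this
  calc σ⁻¹ i.rev = σ⁻¹ (σ (σ⁻¹ i).rev) := by rw [this]
    _ = (σ⁻¹ i).rev := (fun x => σ.symm_apply_apply x : ∀ x, σ⁻¹ (σ x) = x) _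

lemma inSh_mul {σ τ : Equiv.Perm (Fin (2*n))} (hσ : inSh n σ) (hτ : inSh n τ) :
    inSh n (σ * τ) := by
  intro i
  simp only [Equiv.Perm.mul_apply]
  rw [hτ, hσ]

lemma inSh_one : inSh n (1 : Equiv.Perm (Fin (2*n))) := fun _ => rfl

lemma inSh_swap_rev (a : Fin (2*n)) : inSh n (Equiv.swap a a.rev) := by
  intro i
  rcases eq_or_ne i a with rfl | h1
  · simp [Equiv.swap_apply_left, Equiv.swap_apply_right]
  rcases eq_or_ne i a.rev with rfl | h2
  · simp [Fin.rev_rev, Equiv.swap_apply_left, Equiv.swap_apply_right]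
  · have hi2 : i.rev ≠ a := fun h => h2 (by rw [← h, Fin.rev_rev])
    have hi1 : i.rev ≠ a.rev := fun h => h1 (by
      have := congrArg Fin.rev h; rwa [Fin.rev_rev, Fin.rev_rev] at this)
    rw [Equiv.swap_apply_of_ne_of_ne h1 h2, Equiv.swap_apply_of_ne_of_ne hi2 hi1]

lemma permAct_mul (σ τ : Equiv.Perm (Fin (2*n))) (y : Fin (2*n) → ℤ) :
    permAct n (σ * τ) y = permAct n σ (permAct n τ y) := by
  funext i; simp [permAct, Equiv.Perm.mul_apply]

lemma permAct_one (y : Fin (2*n) → ℤ) : permAct n 1 y = y := rfl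

lemma Iso01_permAct {σ : Equiv.Perm (Fin (2*n))} (hσ : inSh n σ) {y : Fin (2*n) → ℤ}
    (hy : Iso01 n y) : Iso01 n (permAct n σ y) := by
  refine ⟨fun j => hy.1 _, fun j => ?_⟩
  have : σ⁻¹ j.rev = (σ⁻¹ j).rev := inSh_inv hσ j
  simp only [permAct, this]
  exact hy.2 _

def sgn2 (σ : Equiv.Perm (Fin (2*n))) : ZMod 2 :=
  if Equiv.Perm.sign σ = 1 then 0 else 1

lemma sgn2_mul (σ τ : Equiv.Perm (Fin (2*n))) : sgn2 (σ * τ) = sgn2 σ + sgn2 τ := by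
  unfold sgn2
  rcases Int.units_eq_one_or (Equiv.Perm.sign σ) with h1 | h1 <;>
  rcases Int.units_eq_one_or (Equiv.Perm.sign τ) with h2 | h2 <;>
  simp [map_mul, h1, h2] <;> decide

lemma sgn2_one : sgn2 (1 : Equiv.Perm (Fin (2*n))) = 0 := by simp [sgn2]

lemma sgn2_swap_rev (a : Fin (2*n)) : sgn2 (Equiv.swap a a.rev) = 1 := by
  unfold sgn2
  rw [Equiv.Perm.sign_swap (Ne.symm (rev_ne a))]
  decide

lemma sgn2_eq_zero_iff (σ : Equiv.Perm (Fin (2*n))) :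
    sgn2 σ = 0 ↔ Equiv.Perm.sign σ = 1 := by
  unfold sgn2
  rcases Int.units_eq_one_or (Equiv.Perm.sign σ) with h1 | h1 <;> simp [h1] <;> decide




lemma zmod_cast_pred {k : ℕ} (hk : 1 ≤ k) : ((k - 1 : ℕ) : ZMod 2) = (k : ZMod 2) + 1 := by
  obtain ⟨m, rfl⟩ := Nat.exists_eq_add_of_le hk
  push_cast [Nat.add_sub_cancel_left]
  ring_nf
  rw [show ((2:ZMod 2)) = 0 from rfl]
  ring

lemma zB_flip {y : Fin (2*n) → ℤ} (hy : Iso01 n y) (a : Fin (2*n)) :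
    (zB n (permAct n (Equiv.swap a a.rev) y) : ZMod 2) = (zB n y : ZMod 2) + 1 := by
  set y' := permAct n (Equiv.swap a a.rev) y with hy'
  set b : Fin (2*n) := if (a:ℕ) < n then a else a.rev with hb
  have hbn : (b:ℕ) < n := by
    rw [hb]; split
    · assumption
    · next h => exact (rev_lt_iff a).mpr h
  have hbrev : Equiv.swap a a.rev b = b.rev := by
    rw [hb]; split
    · exact Equiv.swap_apply_left a a.rev
    · rw [Fin.rev_rev]; exact Equiv.swap_apply_right a a.rev
  have hyb' : y' b = 1 - y b := by
    have : y' b = y (Equiv.swap a a.rev b) := by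
      rw [hy']; simp [permAct, Equiv.swap_inv]
    rw [this, hbrev]
    have := hy.2 b; linarith
  have hother : ∀ j : Fin (2*n), (j:ℕ) < n → j ≠ b → y' j = y j := by
    intro j hj hjb
    have hja : j ≠ a := by
      intro h; subst h; apply hjb; rw [hb, if_pos hj]
    have hjar : j ≠ a.rev := by
      intro h; subst h
      have hna : ¬ ((a:ℕ) < n) := (rev_lt_iff a).mp hj
      exact hjb (by rw [hb, if_neg hna])
    rw [hy']; simp [permAct, Equiv.swap_inv, Equiv.swap_apply_of_ne_of_ne hja hjar]
  have h01 := hy.1 b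
  unfold zB
  rcases h01 with h0 | h1
  · -- y b = 0 : set loses b
    have hset : (univ.filter fun j : Fin (2*n) => (j:ℕ) < n ∧ y' j = 0)
        = (univ.filter fun j : Fin (2*n) => (j:ℕ) < n ∧ y j = 0).erase b := by
      ext j
      simp only [mem_filter, mem_erase, mem_univ, true_and]
      constructor
      · rintro ⟨hj, hj0⟩
        have hjb : j ≠ b := by
          intro h; subst h; rw [hyb', h0] at hj0; norm_num at hj0
        exact ⟨hjb, hj, by rwa [← hother j hj hjb]⟩
      · rintro ⟨hjb, hj, hj0⟩
        exact ⟨hj, by rwa [hother j hj hjb]⟩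
    have hmem : b ∈ (univ.filter fun j : Fin (2*n) => (j:ℕ) < n ∧ y j = 0) := by
      simp [hbn, h0]
    rw [hset, card_erase_of_mem hmem]
    have hpos : 1 ≤ (univ.filter fun j : Fin (2*n) => (j:ℕ) < n ∧ y j = 0).card :=
      card_pos.mpr ⟨b, hmem⟩
    rw [zmod_cast_pred hpos]
  · -- y b = 1 : set gains b
    have hset : (univ.filter fun j : Fin (2*n) => (j:ℕ) < n ∧ y' j = 0)
        = insert b (univ.filter fun j : Fin (2*n) => (j:ℕ) < n ∧ y j = 0) := by
      ext j
      simp only [mem_filter, mem_insert, mem_univ, true_and]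
      constructor
      · rintro ⟨hj, hj0⟩
        rcases eq_or_ne j b with rfl | hjb
        · exact Or.inl rfl
        · exact Or.inr ⟨hj, by rwa [← hother j hj hjb]⟩
      · rintro (rfl | ⟨hj, hj0⟩)
        · exact ⟨hbn, by rw [hyb', h1]; ring⟩
        · have hjb : j ≠ b := by
            intro h; subst h; rw [h1] at hj0; norm_num at hj0
          exact ⟨hj, by rwa [hother j hj hjb]⟩
    have hnmem : b ∉ (univ.filter fun j : Fin (2*n) => (j:ℕ) < n ∧ y j = 0) := by
      simp [hbn, h1]
    rw [hset, card_insert_of_notMem hnmem]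
    push_cast
    ring

/-- number of first-half indices sent out of the first half -/
def fOut (n : ℕ) (σ : Equiv.Perm (Fin (2*n))) : ℕ :=
  (univ.filter fun j : Fin (2*n) => (j:ℕ) < n ∧ ¬ ((σ j : ℕ) < n)).card

lemma inv_preserves {σ : Equiv.Perm (Fin (2*n))}
    (hB : ∀ j : Fin (2*n), (j:ℕ) < n → (σ j : ℕ) < n) :
    ∀ j : Fin (2*n), (j:ℕ) < n → ((σ⁻¹ j : Fin (2*n)) : ℕ) < n := by
  intro j hj
  set Bf := (univ.filter fun k : Fin (2*n) => (k:ℕ) < n) with hBf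
  have himg : Bf.image σ = Bf := by
    apply Finset.eq_of_subset_of_card_le
    · intro k hk
      simp only [hBf, mem_image, mem_filter, mem_univ, true_and] at hk ⊢
      obtain ⟨m, hm, rfl⟩ := hk
      exact hB m hm
    · rw [Finset.card_image_of_injective _ σ.injective]
  have hjB : j ∈ Bf := by simp [hBf, hj]
  rw [← himg] at hjB
  simp only [mem_image, hBf, mem_filter, mem_univ, true_and] at hjB
  obtain ⟨m, hm, hmj⟩ := hjB
  have : σ⁻¹ j = m := by rw [← hmj]; exact (fun x => σ.symm_apply_apply x : ∀ x, σ⁻¹ (σ x) = x) m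
  rw [this]; exact hm

lemma zB_preserved {σ : Equiv.Perm (Fin (2*n))} {y : Fin (2*n) → ℤ}
    (hB : ∀ j : Fin (2*n), (j:ℕ) < n → (σ j : ℕ) < n) :
    zB n (permAct n σ y) = zB n y := by
  unfold zB
  have : (univ.filter fun j : Fin (2*n) => (j:ℕ) < n ∧ permAct n σ y j = 0)
      = (univ.filter fun k : Fin (2*n) => (k:ℕ) < n ∧ y k = 0).image σ := by
    ext j
    simp only [mem_filter, mem_image, mem_univ, true_and]
    simp only [permAct]
    constructor
    · rintro ⟨hj, hj0⟩
      exact ⟨σ⁻¹ j, ⟨inv_preserves hB j hj, hj0⟩, (fun x => σ.apply_symm_apply x : ∀ x, σ (σ⁻¹ x) = x) j⟩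
    · rintro ⟨k, ⟨hk, hk0⟩, rfl⟩
      refine ⟨hB k hk, ?_⟩
      rw [← Equiv.Perm.mul_apply, inv_mul_cancel, Equiv.Perm.one_apply]; exact hk0
  rw [this, Finset.card_image_of_injective _ σ.injective]

lemma sign_of_preserving {σ : Equiv.Perm (Fin (2*n))} (hσ : inSh n σ)
    (hB : ∀ j : Fin (2*n), (j:ℕ) < n → (σ j : ℕ) < n) :
    Equiv.Perm.sign σ = 1 := by
  have hBinv := inv_preserves hB
  set π : Equiv.Perm (Fin (2*n)) :=
    { toFun := fun i => if (i:ℕ) < n then σ i else i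
      invFun := fun i => if (i:ℕ) < n then σ⁻¹ i else i
      left_inv := by
        intro i
        by_cases h : (i:ℕ) < n
        · simp [h, hB i h, (fun x => σ.symm_apply_apply x : ∀ x, σ⁻¹ (σ x) = x)]
        · simp [h]
      right_inv := by
        intro i
        by_cases h : (i:ℕ) < n
        · have hh : ((σ.symm i : Fin (2*n)) : ℕ) < n := hBinv i h
          simp [h, hh, (fun x => σ.apply_symm_apply x : ∀ x, σ (σ⁻¹ x) = x)]
        · simp [h] } with hπ
  have hπ_apply : ∀ i, π i = if (i:ℕ) < n then σ i else i := fun i => rfl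
  have hdecomp : σ = π * (Fin.revPerm * π * Fin.revPerm) := by
    apply Equiv.ext
    intro i
    simp only [Equiv.Perm.mul_apply, Fin.revPerm_apply, hπ_apply]
    by_cases h : (i:ℕ) < n
    · have h1 : ¬ ((i.rev : ℕ) < n) := fun hh => (rev_lt_iff i).mp hh h
      rw [if_neg h1, Fin.rev_rev, if_pos h]
    · have h1 : (i.rev : ℕ) < n := (rev_lt_iff i).mpr h
      rw [if_pos h1]
      have h2 : σ i.rev = (σ i).rev := hσ i
      rw [h2, Fin.rev_rev]
      have h3 : (σ i : ℕ) < n → False := by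
        intro hc
        have : ((σ i.rev : Fin (2*n)) : ℕ) < n → False := by
          rw [h2, rev_lt_iff]; intro hh; exact hh hc
        exact this (hB i.rev h1)
      rw [if_neg h3]
  rw [hdecomp]
  simp only [map_mul]
  have hcomm : ∀ u v : ℤˣ, u * (v * u * v) = 1 := by
    intro u v
    rcases Int.units_eq_one_or u with rfl | rfl <;>
      rcases Int.units_eq_one_or v with rfl | rfl <;> decide
  exact hcomm _ _

lemma zB_sgn_aux : ∀ (m : ℕ) (σ : Equiv.Perm (Fin (2*n))), fOut n σ = m → inSh n σ →
    ∀ y : Fin (2*n) → ℤ, Iso01 n y →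
    (zB n (permAct n σ y) : ZMod 2) = (zB n y : ZMod 2) + sgn2 σ := by
  intro m
  induction m using Nat.strong_induction_on with
  | _ m IH =>
    intro σ hfσ hσ y hy
    rcases Nat.eq_zero_or_pos m with rfl | hm
    · -- base case
      have hfσ' := hfσ
      unfold fOut at hfσ'
      have hB : ∀ j : Fin (2*n), (j:ℕ) < n → (σ j : ℕ) < n := by
        intro j hj
        by_contra hc
        have hmem : j ∈ (univ.filter fun j : Fin (2*n) => (j:ℕ) < n ∧ ¬ ((σ j : ℕ) < n)) := by
          simp only [mem_filter, mem_univ, true_and]; exact ⟨hj, hc⟩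
        have := Finset.card_pos.mpr ⟨j, hmem⟩
        omega
      rw [zB_preserved hB, (sgn2_eq_zero_iff σ).mpr (sign_of_preserving hσ hB), add_zero]
    · -- step
      have hfσ' := hfσ
      unfold fOut at hfσ'
      have hex : ∃ j₀ : Fin (2*n), (j₀:ℕ) < n ∧ ¬ ((σ j₀ : ℕ) < n) := by
        have hne : (univ.filter fun j : Fin (2*n) => (j:ℕ) < n ∧ ¬ ((σ j : ℕ) < n)).Nonempty := by
          rw [← Finset.card_pos]; omega
        obtain ⟨j₀, hj₀⟩ := hne
        simp only [mem_filter, mem_univ, true_and] at hj₀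
        exact ⟨j₀, hj₀⟩
      obtain ⟨j₀, hj₀B, hj₀out⟩ := hex
      set a : Fin (2*n) := σ j₀ with ha
      set σ₂ : Equiv.Perm (Fin (2*n)) := Equiv.swap a a.rev * σ with hσ₂
      have hσ₂Sh : inSh n σ₂ := inSh_mul (inSh_swap_rev a) hσ
      have hfix : ∀ j : Fin (2*n), (j:ℕ) < n → j ≠ j₀ → σ₂ j = σ j := by
        intro j hj hjne
        have h1 : σ j ≠ a := fun h => hjne (σ.injective (by rw [h, ha]))
        have h2 : σ j ≠ a.rev := by
          intro h
          have : j = σ⁻¹ (a.rev) := by rw [← h, ← Equiv.Perm.mul_apply, inv_mul_cancel, Equiv.Perm.one_apply]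
          rw [inSh_inv hσ a, ha, ← Equiv.Perm.mul_apply, inv_mul_cancel, Equiv.Perm.one_apply] at this
          subst this
          exact ((rev_lt_iff j₀).mp hj) hj₀B
        simp only [hσ₂, Equiv.Perm.mul_apply]
        exact Equiv.swap_apply_of_ne_of_ne h1 h2
      have hj₀new : σ₂ j₀ = a.rev := by
        simp only [hσ₂, Equiv.Perm.mul_apply, ← ha]
        exact Equiv.swap_apply_left a a.rev
      have hmem : j₀ ∈ (univ.filter fun j : Fin (2*n) => (j:ℕ) < n ∧ ¬ ((σ j : ℕ) < n)) := by
        simp only [mem_filter, mem_univ, true_and]; exact ⟨hj₀B, hj₀out⟩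
      have hfdec : fOut n σ₂ = m - 1 := by
        unfold fOut
        have hset : (univ.filter fun j : Fin (2*n) => (j:ℕ) < n ∧ ¬ ((σ₂ j : ℕ) < n))
            = (univ.filter fun j : Fin (2*n) => (j:ℕ) < n ∧ ¬ ((σ j : ℕ) < n)).erase j₀ := by
          ext j
          simp only [mem_filter, mem_erase, mem_univ, true_and]
          constructor
          · rintro ⟨hj, hj2⟩
            have hjne : j ≠ j₀ := by
              intro h; subst h
              rw [hj₀new] at hj2
              exact hj2 ((rev_lt_iff a).mpr hj₀out)
            rw [hfix j hj hjne] at hj2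
            exact ⟨hjne, hj, hj2⟩
          · rintro ⟨hjne, hj, hj2⟩
            rw [← hfix j hj hjne] at hj2
            exact ⟨hj, hj2⟩
        rw [hset, card_erase_of_mem hmem]
        omega
      have hIH := IH (m-1) (by omega) σ₂ hfdec hσ₂Sh y hy
      have hrec : σ = Equiv.swap a a.rev * σ₂ := by
        rw [hσ₂, ← mul_assoc, Equiv.swap_mul_self, one_mul]
      have hact : permAct n σ y = permAct n (Equiv.swap a a.rev) (permAct n σ₂ y) := by
        rw [← permAct_mul, ← hrec]
      rw [hact, zB_flip (Iso01_permAct hσ₂Sh hy) a, hIH]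
      have hs : sgn2 σ = 1 + sgn2 σ₂ := by rw [hrec, sgn2_mul, sgn2_swap_rev]
      rw [hs]
      ring


variable {n : ℕ}

theorem zB_sgn {σ : Equiv.Perm (Fin (2*n))} (hσ : inSh n σ) {y : Fin (2*n) → ℤ}
    (hy : Iso01 n y) :
    (zB n (permAct n σ y) : ZMod 2) = (zB n y : ZMod 2) + sgn2 σ :=
  zB_sgn_aux (fOut n σ) σ rfl hσ y hy

lemma iso_ne_iff {a b : ℤ} (ha : a = 0 ∨ a = 1) (hb : b = 0 ∨ b = 1) :
    a ≠ b ↔ ¬ (a = 0 ↔ b = 0) := by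
  rcases ha with rfl | rfl <;> rcases hb with rfl | rfl <;> simp

lemma diff_parity {y z : Fin (2*n) → ℤ} (hy : Iso01 n y) (hz : Iso01 n z) :
    (((univ.filter fun j : Fin (2*n) => (j:ℕ) < n ∧ y j ≠ z j).card : ℕ) : ZMod 2)
      = (zB n y : ZMod 2) + (zB n z : ZMod 2) := by
  set Y := (univ.filter fun j : Fin (2*n) => (j:ℕ) < n ∧ y j = 0) with hY
  set Z := (univ.filter fun j : Fin (2*n) => (j:ℕ) < n ∧ z j = 0) with hZ
  set D := (univ.filter fun j : Fin (2*n) => (j:ℕ) < n ∧ y j ≠ z j) with hD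
  have hDeq : D = (Y ∪ Z) \ (Y ∩ Z) := by
    ext j
    simp only [hD, hY, hZ, mem_filter, mem_sdiff, mem_union, mem_inter, mem_univ, true_and]
    constructor
    · rintro ⟨hj, hne⟩
      rw [iso_ne_iff (hy.1 j) (hz.1 j)] at hne
      constructor
      · by_cases h0 : y j = 0
        · exact Or.inl ⟨hj, h0⟩
        · refine Or.inr ⟨hj, ?_⟩
          by_contra h1
          exact hne ⟨fun h => absurd h h0, fun h => absurd h h1⟩
      · rintro ⟨⟨_, h1⟩, ⟨_, h2⟩⟩
        exact hne ⟨fun _ => h2, fun _ => h1⟩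
    · rintro ⟨h1, h2⟩
      have hj : (j:ℕ) < n := by rcases h1 with ⟨h, _⟩ | ⟨h, _⟩ <;> exact h
      refine ⟨hj, ?_⟩
      rw [iso_ne_iff (hy.1 j) (hz.1 j)]
      intro hiff
      rcases h1 with ⟨_, h0⟩ | ⟨_, h0⟩
      · exact h2 ⟨⟨hj, h0⟩, ⟨hj, hiff.mp h0⟩⟩
      · exact h2 ⟨⟨hj, hiff.mpr h0⟩, ⟨hj, h0⟩⟩
  have hcard : D.card + (Y ∩ Z).card + (Y ∩ Z).card = Y.card + Z.card := by
    rw [hDeq, card_sdiff_of_subset (by exact inter_subset_union)]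
    have h2 := Finset.card_union_add_card_inter Y Z
    have h3 : (Y ∩ Z).card ≤ (Y ∪ Z).card := card_le_card inter_subset_union
    omega
  have hcast := congrArg (fun t : ℕ => (t : ZMod 2)) hcard
  push_cast at hcast
  have h2 : ((Y ∩ Z).card : ZMod 2) + ((Y ∩ Z).card : ZMod 2) = 0 := by
    rw [← two_mul, show ((2:ZMod 2)) = 0 from rfl, zero_mul]
  have hzBy : zB n y = Y.card := rfl
  have hzBz : zB n z = Z.card := rfl
  rw [hzBy, hzBz]
  linear_combination hcast - h2

lemma val01_flip {a b : ℤ} (ha : a = 0 ∨ a = 1) (hb : b = 0 ∨ b = 1) (hne : a ≠ b) :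
    1 - a = b := by rcases ha with rfl | rfl <;> rcases hb with rfl | rfl <;> omega

lemma orbit_back_aux (μ0 : Fin (2*n) → ℤ) (hμ0 : Iso01 n μ0) :
    ∀ m : ℕ, ∀ y : Fin (2*n) → ℤ, Iso01 n y →
      (univ.filter fun j : Fin (2*n) => (j:ℕ) < n ∧ y j ≠ μ0 j).card = m → Even m →
      ∃ σ, inW0 n σ ∧ y = permAct n σ μ0 := by
  intro m
  induction m using Nat.strong_induction_on with
  | _ m IH =>
    intro y hy hcard hEven
    rcases Nat.eq_zero_or_pos m with rfl | hm
    · refine ⟨1, ⟨inSh_one, by simp⟩, ?_⟩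
      rw [permAct_one]
      funext j
      have hempty : ∀ j : Fin (2*n), (j:ℕ) < n → y j = μ0 j := by
        intro j hj
        by_contra hne
        have : j ∈ (univ.filter fun j : Fin (2*n) => (j:ℕ) < n ∧ y j ≠ μ0 j) := by
          simp only [mem_filter, mem_univ, true_and]; exact ⟨hj, hne⟩
        have := Finset.card_pos.mpr ⟨j, this⟩
        omega
      by_cases hj : (j:ℕ) < n
      · exact hempty j hj
      · have hrev : (j.rev : ℕ) < n := (rev_lt_iff j).mpr hj
        have h1 := hy.2 j.rev
        have h2 := hμ0.2 j.rev
        rw [Fin.rev_rev] at h1 h2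
        have := hempty j.rev hrev
        linarith
    · -- m ≥ 2
      have hm2 : 2 ≤ m := by
        rcases hEven with ⟨t, ht⟩; omega
      set D := (univ.filter fun j : Fin (2*n) => (j:ℕ) < n ∧ y j ≠ μ0 j) with hD
      have hj : ∃ j, j ∈ D := by
        have : 0 < D.card := by omega
        obtain ⟨j, hj⟩ := Finset.card_pos.mp this
        exact ⟨j, hj⟩
      obtain ⟨j, hjD⟩ := hj
      have hk : ∃ k, k ∈ D.erase j := by
        have : 0 < (D.erase j).card := by
          rw [card_erase_of_mem hjD]; omega
        obtain ⟨k, hk⟩ := Finset.card_pos.mp this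
        exact ⟨k, hk⟩
      obtain ⟨k, hkD'⟩ := hk
      have hkj : k ≠ j := (Finset.mem_erase.mp hkD').1
      have hkD : k ∈ D := (Finset.mem_erase.mp hkD').2
      have hjB : (j:ℕ) < n := ((Finset.mem_filter.mp hjD).2).1
      have hjne : y j ≠ μ0 j := ((Finset.mem_filter.mp hjD).2).2
      have hkB : (k:ℕ) < n := ((Finset.mem_filter.mp hkD).2).1
      have hkne : y k ≠ μ0 k := ((Finset.mem_filter.mp hkD).2).2
      set ρ : Equiv.Perm (Fin (2*n)) := Equiv.swap j j.rev * Equiv.swap k k.rev with hρ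
      -- basic disjointness
      have hjrk : j.rev ≠ k := by
        intro h; rw [← h] at hkB; exact (rev_lt_iff j).mp hkB hjB
      have hjrkr : j.rev ≠ k.rev := by
        intro h
        have := congrArg Fin.rev h
        rw [Fin.rev_rev, Fin.rev_rev] at this
        exact hkj this.symm
      have hjkr : j ≠ k.rev := by
        intro h; rw [h] at hjB; exact (rev_lt_iff k).mp hjB hkB
      have hρinv : ∀ i : Fin (2*n), ρ⁻¹ i = Equiv.swap k k.rev (Equiv.swap j j.rev i) := by
        intro i
        rw [hρ, mul_inv_rev, Equiv.swap_inv, Equiv.swap_inv, Equiv.Perm.mul_apply]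
      set y' := permAct n ρ y with hy'def
      have hy'j : y' j = μ0 j := by
        have h1 : ρ⁻¹ j = j.rev := by
          rw [hρinv, Equiv.swap_apply_left, Equiv.swap_apply_of_ne_of_ne hjrk hjrkr]
        show y (ρ⁻¹ j) = μ0 j
        rw [h1]
        have := hy.2 j
        have heq : y j.rev = 1 - y j := by linarith
        rw [heq]
        exact val01_flip (hy.1 j) (hμ0.1 j) hjne
      have hy'k : y' k = μ0 k := by
        have h1 : ρ⁻¹ k = k.rev := by
          rw [hρinv, Equiv.swap_apply_of_ne_of_ne hkj (fun h => hjrk h.symm),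
            Equiv.swap_apply_left]
        show y (ρ⁻¹ k) = μ0 k
        rw [h1]
        have := hy.2 k
        have heq : y k.rev = 1 - y k := by linarith
        rw [heq]
        exact val01_flip (hy.1 k) (hμ0.1 k) hkne
      have hy'other : ∀ i : Fin (2*n), (i:ℕ) < n → i ≠ j → i ≠ k → y' i = y i := by
        intro i hi hij hik
        have h1 : i ≠ j.rev := fun h => by rw [h] at hi; exact (rev_lt_iff j).mp hi hjB
        have h2 : i ≠ k.rev := fun h => by rw [h] at hi; exact (rev_lt_iff k).mp hi hkB
        show y (ρ⁻¹ i) = y i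
        rw [hρinv, Equiv.swap_apply_of_ne_of_ne hij h1,
          Equiv.swap_apply_of_ne_of_ne hik h2]
      have hρSh : inSh n ρ := inSh_mul (inSh_swap_rev j) (inSh_swap_rev k)
      have hy'iso : Iso01 n y' := Iso01_permAct hρSh hy
      have hD' : (univ.filter fun i : Fin (2*n) => (i:ℕ) < n ∧ y' i ≠ μ0 i)
          = (D.erase j).erase k := by
        ext i
        simp only [mem_filter, mem_erase, mem_univ, true_and, hD]
        constructor
        · rintro ⟨hi, hne⟩
          have hij : i ≠ j := fun h => by rw [h, hy'j] at hne; exact hne rfl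
          have hik : i ≠ k := fun h => by rw [h, hy'k] at hne; exact hne rfl
          rw [hy'other i hi hij hik] at hne
          exact ⟨hik, hij, hi, hne⟩
        · rintro ⟨hik, hij, hi, hne⟩
          rw [← hy'other i hi hij hik] at hne
          exact ⟨hi, hne⟩
      have hcard' : (univ.filter fun i : Fin (2*n) => (i:ℕ) < n ∧ y' i ≠ μ0 i).card = m - 2 := by
        rw [hD', card_erase_of_mem (Finset.mem_erase.mpr ⟨hkj, hkD⟩), card_erase_of_mem hjD]
        omega
      have hEven' : Even (m - 2) := by
        rcases hEven with ⟨t, ht⟩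
        exact ⟨t - 1, by omega⟩
      obtain ⟨τ, hτW, hτeq⟩ := IH (m - 2) (by omega) y' hy'iso hcard' hEven'
      refine ⟨ρ⁻¹ * τ, ⟨inSh_mul (inSh_inv hρSh) hτW.1, ?_⟩, ?_⟩
      · rw [map_mul, map_inv, hτW.2, hρ, map_mul,
          Equiv.Perm.sign_swap (Ne.symm (rev_ne j)), Equiv.Perm.sign_swap (Ne.symm (rev_ne k))]
        decide
      · rw [permAct_mul, ← hτeq, hy'def, ← permAct_mul, inv_mul_cancel, permAct_one]

theorem orbit_eq (μ0 : Fin (2*n) → ℤ) (hμ0 : Iso01 n μ0) :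
    {y : Fin (2*n) → ℤ | ∃ σ, inW0 n σ ∧ y = permAct n σ μ0}
      = Ocl n (zB n μ0 : ZMod 2) := by
  ext y
  simp only [Set.mem_setOf_eq, Ocl]
  constructor
  · rintro ⟨σ, ⟨hσSh, hσsgn⟩, rfl⟩
    refine ⟨Iso01_permAct hσSh hμ0, ?_⟩
    rw [zB_sgn hσSh hμ0, (sgn2_eq_zero_iff σ).mpr hσsgn, add_zero]
  · rintro ⟨hyiso, hycl⟩
    have hpar : (((univ.filter fun j : Fin (2*n) => (j:ℕ) < n ∧ y j ≠ μ0 j).card : ℕ) : ZMod 2)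
        = 0 := by
      rw [diff_parity hyiso hμ0, hycl]
      ring_nf
      rw [show ((2:ZMod 2)) = 0 from rfl, mul_zero]
    have hEven : Even (univ.filter fun j : Fin (2*n) => (j:ℕ) < n ∧ y j ≠ μ0 j).card := by
      rw [even_iff_two_dvd]
      rwa [ZMod.natCast_eq_zero_iff] at hpar
    exact orbit_back_aux μ0 hμ0 _ y hyiso rfl hEven


variable {n : ℕ}

/-- first-half index set -/
def Bf (n : ℕ) : Finset (Fin (2*n)) := univ.filter fun j : Fin (2*n) => (j:ℕ) < n

lemma card_Bf : (Bf n).card = n := by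
  unfold Bf
  rw [Finset.card_bij (fun (j : Fin (2*n)) _ => (j:ℕ))]
  · exact Finset.card_range n
  · intro a ha
    simp only [mem_filter, mem_univ, true_and] at ha
    simpa using ha
  · intro a _ b _ h
    exact Fin.ext h
  · intro a ha
    simp only [Finset.mem_range] at ha
    refine ⟨⟨a, by omega⟩, ?_, rfl⟩
    simp only [mem_filter, mem_univ, true_and]
    exact ha

lemma rev_zero_eq (hn : 0 < n) :
    (⟨0, by omega⟩ : Fin (2*n)).rev = ⟨2*n - 1, by omega⟩ := by
  apply Fin.ext
  rw [Fin.val_rev]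

lemma sum_pairs (g : Fin (2*n) → ℝ) :
    ∑ j, g j = ∑ j ∈ Bf n, (g j + g j.rev) := by
  have hsplit := Finset.sum_filter_add_sum_filter_not univ
    (fun j : Fin (2*n) => (j:ℕ) < n) g
  have h2 : ∑ j ∈ univ.filter (fun j : Fin (2*n) => ¬ (j:ℕ) < n), g j
      = ∑ j ∈ Bf n, g j.rev := by
    apply Finset.sum_nbij' (fun j : Fin (2*n) => j.rev) (fun j : Fin (2*n) => j.rev)
    · intro a ha
      simp only [Bf, mem_filter, mem_univ, true_and] at ha ⊢
      exact (rev_lt_iff a).mpr ha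
    · intro a ha
      simp only [Bf, mem_filter, mem_univ, true_and] at ha ⊢
      intro hc
      exact (rev_lt_iff a).mp hc ha
    · intro a _; exact Fin.rev_rev a
    · intro a _; exact Fin.rev_rev a
    · intro a _; rw [Fin.rev_rev]
  rw [Finset.sum_add_distrib, ← h2]
  exact hsplit.symm

lemma pair_vals {x : Fin (2*n) → ℝ} (hn : 0 < n) (hXR : inXR n x)
    (hanch : x ⟨0, by omega⟩ + x ⟨2*n - 1, by omega⟩ = 1) :
    ∀ k : Fin (2*n), x k + x k.rev = 1 := by
  intro k
  have h := hXR k ⟨0, by omega⟩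
  rw [rev_zero_eq hn] at h
  linarith

lemma pair_sum_formula {x : Fin (2*n) → ℝ} (hp : ∀ k : Fin (2*n), x k + x k.rev = 1)
    {y : Fin (2*n) → ℤ} (hy : Iso01 n y) :
    ∑ m, (y m : ℝ) * x m
      = ∑ k ∈ Bf n, ((y k : ℝ) * x k + (1 - (y k : ℝ)) * (1 - x k)) := by
  rw [sum_pairs (fun m => (y m : ℝ) * x m)]
  apply Finset.sum_congr rfl
  intro k _
  have h0 : (y k : ℝ) + (y k.rev : ℝ) = 1 := by exact_mod_cast hy.2 k
  have h1 : (y k.rev : ℝ) = 1 - (y k : ℝ) := by linarith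
  have h2 : x k.rev = 1 - x k := by have := hp k; linarith
  rw [h1, h2]

/-- The polytope. -/
def Pset (n : ℕ) (hn : 0 < n) (q : ZMod 2) : Set (Fin (2*n) → ℝ) :=
  {x | inXR n x ∧ (∀ j, 0 ≤ x j ∧ x j ≤ 1) ∧
       x ⟨0, by omega⟩ + x ⟨2*n - 1, by omega⟩ = 1 ∧
       ∀ y ∈ Ocl n q, (1:ℝ) ≤ ∑ m, (y m : ℝ) * x m}

/-- The vertex set. -/
def Vcast (n : ℕ) (p : ZMod 2) : Set (Fin (2*n) → ℝ) :=
  (fun y : Fin (2*n) → ℤ => fun j => ((y j : ℤ) : ℝ)) '' Ocl n p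

lemma Ocl_finite (c : ZMod 2) : (Ocl n c).Finite := by
  apply Set.Finite.subset (Set.finite_range
    (fun ε : Fin (2*n) → Bool => fun j => if ε j then (1:ℤ) else 0))
  intro y hy
  obtain ⟨⟨h01, _⟩, _⟩ := hy
  refine ⟨fun j => decide (y j = 1), ?_⟩
  funext j
  rcases h01 j with h0 | h1
  · have : y j ≠ 1 := by rw [h0]; norm_num
    simp [this, h0]
  · simp [h1]

lemma Vcast_finite (p : ZMod 2) : (Vcast n p).Finite := (Ocl_finite p).image _

lemma Pset_convex (hn : 0 < n) (q : ZMod 2) : Convex ℝ (Pset n hn q) := by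
  intro x hx y hy a b ha hb hab
  obtain ⟨hx1, hx2, hx3, hx4⟩ := hx
  obtain ⟨hy1, hy2, hy3, hy4⟩ := hy
  have happ : ∀ j, (a • x + b • y) j = a * x j + b * y j := by
    intro j; simp [Pi.add_apply, Pi.smul_apply, smul_eq_mul]
  refine ⟨?_, ?_, ?_, ?_⟩
  · intro i j
    simp only [happ]
    linear_combination a * (hx1 i j) + b * (hy1 i j)
  · intro j
    simp only [happ]
    constructor
    · have h1 := mul_nonneg ha (hx2 j).1
      have h2 := mul_nonneg hb (hy2 j).1
      linarith
    · have h1 := mul_le_mul_of_nonneg_left (hx2 j).2 ha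
      have h2 := mul_le_mul_of_nonneg_left (hy2 j).2 hb
      linarith
  · simp only [happ]
    linear_combination a * hx3 + b * hy3 + hab
  · intro z hz
    have hsum : ∑ m, (z m : ℝ) * (a • x + b • y) m
        = a * (∑ m, (z m : ℝ) * x m) + b * (∑ m, (z m : ℝ) * y m) := by
      rw [Finset.mul_sum, Finset.mul_sum, ← Finset.sum_add_distrib]
      apply Finset.sum_congr rfl
      intro m _
      rw [happ]
      ring
    rw [hsum]
    have h1 := mul_le_mul_of_nonneg_left (hx4 z hz) ha
    have h2 := mul_le_mul_of_nonneg_left (hy4 z hz) hb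
    linarith

lemma Pset_isClosed (hn : 0 < n) (q : ZMod 2) : IsClosed (Pset n hn q) := by
  have h1 : IsClosed {x : Fin (2*n) → ℝ | inXR n x} := by
    have he : {x : Fin (2*n) → ℝ | inXR n x}
        = ⋂ i, ⋂ j, {x : Fin (2*n) → ℝ | x i + x i.rev = x j + x j.rev} := by
      ext x; simp [inXR, Set.mem_iInter]
    rw [he]
    exact isClosed_iInter fun i => isClosed_iInter fun j =>
      isClosed_eq ((continuous_apply i).add (continuous_apply i.rev))
        ((continuous_apply j).add (continuous_apply j.rev))
  have h2 : IsClosed {x : Fin (2*n) → ℝ | ∀ j, 0 ≤ x j ∧ x j ≤ 1} := by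
    have he : {x : Fin (2*n) → ℝ | ∀ j, 0 ≤ x j ∧ x j ≤ 1}
        = ⋂ j, ({x : Fin (2*n) → ℝ | 0 ≤ x j} ∩ {x | x j ≤ 1}) := by
      ext x; simp [Set.mem_iInter, forall_and]
    rw [he]
    exact isClosed_iInter fun j =>
      ((isClosed_le continuous_const (continuous_apply j)).inter
        (isClosed_le (continuous_apply j) continuous_const))
  have h3 : IsClosed {x : Fin (2*n) → ℝ |
      x ⟨0, by omega⟩ + x ⟨2*n - 1, by omega⟩ = 1} :=
    isClosed_eq ((continuous_apply (⟨0, by omega⟩ : Fin (2*n))).add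
      (continuous_apply (⟨2*n-1, by omega⟩ : Fin (2*n)))) continuous_const
  have h4 : IsClosed {x : Fin (2*n) → ℝ | ∀ y ∈ Ocl n q, (1:ℝ) ≤ ∑ m, (y m : ℝ) * x m} := by
    have he : {x : Fin (2*n) → ℝ | ∀ y ∈ Ocl n q, (1:ℝ) ≤ ∑ m, (y m : ℝ) * x m}
        = ⋂ (y) (_ : y ∈ Ocl n q), {x | (1:ℝ) ≤ ∑ m, (y m : ℝ) * x m} := by
      ext x; simp [Set.mem_iInter]
    rw [he]
    refine isClosed_iInter fun y => isClosed_iInter fun _ =>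
      isClosed_le continuous_const ?_
    exact continuous_finset_sum _ fun m _ => continuous_const.mul (continuous_apply m)
  have he : Pset n hn q = {x : Fin (2*n) → ℝ | inXR n x}
      ∩ ({x : Fin (2*n) → ℝ | ∀ j, 0 ≤ x j ∧ x j ≤ 1}
      ∩ ({x : Fin (2*n) → ℝ | x ⟨0, by omega⟩ + x ⟨2*n - 1, by omega⟩ = 1}
      ∩ {x : Fin (2*n) → ℝ | ∀ y ∈ Ocl n q, (1:ℝ) ≤ ∑ m, (y m : ℝ) * x m})) := rfl
  rw [he]
  exact h1.inter (h2.inter (h3.inter h4))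

lemma Pset_isCompact (hn : 0 < n) (q : ZMod 2) : IsCompact (Pset n hn q) := by
  apply IsCompact.of_isClosed_subset
    (isCompact_univ_pi (fun _ : Fin (2*n) => isCompact_Icc (a := (0:ℝ)) (b := 1)))
    (Pset_isClosed hn q)
  intro x hx
  rw [Set.mem_univ_pi]
  intro j
  exact ⟨(hx.2.1 j).1, (hx.2.1 j).2⟩

lemma compl_iso {y : Fin (2*n) → ℤ} (hy : Iso01 n y) : Iso01 n (fun j => 1 - y j) := by
  constructor
  · intro j; rcases hy.1 j with h | h <;> simp [h]
  · intro j; have := hy.2 j; simp only; linarith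

lemma zB_add_compl {y : Fin (2*n) → ℤ} (hy : Iso01 n y) :
    zB n (fun j => 1 - y j) + zB n y = n := by
  classical
  have h1 : zB n (fun j => 1 - y j) = ((Bf n).filter fun j => ¬ (y j = 0)).card := by
    unfold zB Bf
    rw [Finset.filter_filter]
    congr 1
    apply Finset.filter_congr
    intro j _
    show ((j:ℕ) < n ∧ 1 - y j = 0) ↔ ((j:ℕ) < n ∧ ¬ (y j = 0))
    constructor
    · rintro ⟨hj, h0⟩
      exact ⟨hj, fun hc => by rw [hc] at h0; norm_num at h0⟩
    · rintro ⟨hj, h0⟩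
      refine ⟨hj, ?_⟩
      rcases hy.1 j with h | h
      · exact absurd h h0
      · omega
  have h2 : zB n y = ((Bf n).filter fun j => (y j = 0)).card := by
    unfold zB Bf
    rw [Finset.filter_filter]
  have h3 := Finset.card_filter_add_card_filter_not
    (s := Bf n) (p := fun j => y j = 0)
  have h4 := card_Bf (n := n)
  omega

lemma two_zmod_cases : ∀ a b : ZMod 2, a ≠ b → a = b + 1 := by decide

lemma one_ne_zero_zmod2 : (1 : ZMod 2) ≠ 0 := by decide

lemma vertex_ineq {p q : ZMod 2} (hq : q = p + (n : ZMod 2) + 1)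
    {y : Fin (2*n) → ℤ} (hy : y ∈ Ocl n p) {z : Fin (2*n) → ℤ} (hz : z ∈ Ocl n q) :
    (1:ℝ) ≤ ∑ m, (z m : ℝ) * (y m : ℝ) := by
  obtain ⟨hyiso, hyc⟩ := hy
  obtain ⟨hziso, hzc⟩ := hz
  have hZ : (1:ℤ) ≤ ∑ m, z m * y m := by
    by_contra hlt
    push_neg at hlt
    have hnonneg : ∀ m ∈ (univ : Finset (Fin (2*n))), 0 ≤ z m * y m := by
      intro m _
      rcases hziso.1 m with h | h <;> rcases hyiso.1 m with h' | h' <;> simp [h, h']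
    have hzero : ∑ m, z m * y m = 0 := by
      have := Finset.sum_nonneg hnonneg
      omega
    have hall := (Finset.sum_eq_zero_iff_of_nonneg hnonneg).mp hzero
    have hcompl : ∀ m, z m = 1 - y m := by
      intro m
      rcases hyiso.1 m with h | h
      · have hyr : y m.rev = 1 := by have := hyiso.2 m; omega
        have hzr : z m.rev = 0 := by
          have := hall m.rev (Finset.mem_univ _)
          rcases hziso.1 m.rev with hh | hh
          · exact hh
          · rw [hh, hyr] at this; omega
        have := hziso.2 m
        omega
      · have := hall m (Finset.mem_univ _)
        rcases hziso.1 m with hh | hh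
        · rw [hh]; omega
        · rw [hh, h] at this; omega
    have hzeq : z = fun m => 1 - y m := funext hcompl
    have hcard : zB n z + zB n y = n := by
      rw [hzeq]; exact zB_add_compl hyiso
    have hcast : (zB n z : ZMod 2) + (zB n y : ZMod 2) = (n : ZMod 2) := by
      rw [← Nat.cast_add, hcard]
    rw [hzc, hyc, hq] at hcast
    have hbad : (1 : ZMod 2) = 0 := by
      have h2 : p + p = 0 := by
        have h2' : (2 : ZMod 2) = 0 := rfl
        linear_combination p * h2'
      linear_combination hcast - h2
    exact absurd hbad one_ne_zero_zmod2
  calc (1:ℝ) = ((1:ℤ) : ℝ) := by norm_num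
    _ ≤ ((∑ m, z m * y m : ℤ) : ℝ) := by exact_mod_cast hZ
    _ = ∑ m, (z m : ℝ) * (y m : ℝ) := by push_cast; rfl

lemma Vcast_subset_Pset {p q : ZMod 2} (hq : q = p + (n : ZMod 2) + 1) (hn : 0 < n) :
    Vcast n p ⊆ Pset n hn q := by
  rintro _ ⟨y, hy, rfl⟩
  obtain ⟨hyiso, hyc⟩ := hy
  have hpair : ∀ k : Fin (2*n), (y k : ℝ) + (y k.rev : ℝ) = 1 := by
    intro k; exact_mod_cast hyiso.2 k
  refine ⟨?_, ?_, ?_, ?_⟩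
  · intro i j
    simp only
    rw [hpair i, hpair j]
  · intro j
    rcases hyiso.1 j with h | h <;> simp [h]
  · have := hpair ⟨0, by omega⟩
    rw [rev_zero_eq hn] at this
    exact this
  · intro z hz
    exact vertex_ineq hq ⟨hyiso, hyc⟩ hz


variable {n : ℕ}

/-- fractional first-half coordinates -/
noncomputable def fracSet (n : ℕ) (x : Fin (2*n) → ℝ) : Finset (Fin (2*n)) :=
  (Bf n).filter fun k => x k ≠ 0 ∧ x k ≠ 1

/-- value of linear constraint -/
def valx (n : ℕ) (x : Fin (2*n) → ℝ) (y : Fin (2*n) → ℤ) : ℝ := ∑ m, (y m : ℝ) * x m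

/-- pair contribution -/
def realc (x : Fin (2*n) → ℝ) (y : Fin (2*n) → ℤ) (k : Fin (2*n)) : ℝ :=
  (y k : ℝ) * x k + (1 - (y k : ℝ)) * (1 - x k)

lemma valx_eq_sum_realc {x : Fin (2*n) → ℝ} (hp : ∀ k : Fin (2*n), x k + x k.rev = 1)
    {y : Fin (2*n) → ℤ} (hy : Iso01 n y) :
    valx n x y = ∑ k ∈ Bf n, realc x y k :=
  pair_sum_formula hp hy

lemma realc_of_zero {x : Fin (2*n) → ℝ} {y : Fin (2*n) → ℤ} {k : Fin (2*n)}
    (h : y k = 0) : realc x y k = 1 - x k := by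
  unfold realc; rw [h]; push_cast; ring

lemma realc_of_one {x : Fin (2*n) → ℝ} {y : Fin (2*n) → ℤ} {k : Fin (2*n)}
    (h : y k = 1) : realc x y k = x k := by
  unfold realc; rw [h]; push_cast; ring

lemma realc_nonneg {x : Fin (2*n) → ℝ} (hb : ∀ k, 0 ≤ x k ∧ x k ≤ 1)
    {y : Fin (2*n) → ℤ} (hy : Iso01 n y) (k : Fin (2*n)) : 0 ≤ realc x y k := by
  rcases hy.1 k with h | h
  · rw [realc_of_zero h]; linarith [(hb k).2]
  · rw [realc_of_one h]; exact (hb k).1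

lemma realc_frac_pos {x : Fin (2*n) → ℝ} (hb : ∀ k, 0 ≤ x k ∧ x k ≤ 1)
    {y : Fin (2*n) → ℤ} (hy : Iso01 n y) {k : Fin (2*n)} (hk : k ∈ fracSet n x) :
    0 < realc x y k := by
  obtain ⟨_, hk0, hk1⟩ := Finset.mem_filter.mp hk
  rcases hy.1 k with h | h
  · rw [realc_of_zero h]
    have := (hb k).2
    rcases lt_or_eq_of_le this with h' | h'
    · linarith
    · exact absurd h' hk1
  · rw [realc_of_one h]
    have := (hb k).1
    rcases lt_or_eq_of_le this with h' | h'
    · linarith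
    · exact absurd h'.symm hk0

/-- Case A: all coordinates integral. -/
lemma caseA (hn : 0 < n) {p q : ZMod 2} (hq : q = p + (n : ZMod 2) + 1)
    {x : Fin (2*n) → ℝ} (hx : x ∈ Pset n hn q) (hF : fracSet n x = ∅) :
    x ∈ Vcast n p := by
  obtain ⟨hXR, hbd, hanch, hineq⟩ := hx
  have hpairs := pair_vals hn hXR hanch
  have hbin : ∀ j : Fin (2*n), x j = 0 ∨ x j = 1 := by
    intro j
    by_cases hj : (j:ℕ) < n
    · by_contra hc
      push_neg at hc
      have : j ∈ fracSet n x := by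
        unfold fracSet Bf
        simp only [mem_filter, mem_univ, true_and]
        exact ⟨hj, hc.1, hc.2⟩
      rw [hF] at this
      exact absurd this (Finset.notMem_empty j)
    · have hjr : ((j.rev : Fin (2*n)) : ℕ) < n := (rev_lt_iff j).mpr hj
      by_contra hc
      push_neg at hc
      have : j.rev ∈ fracSet n x := by
        unfold fracSet Bf
        simp only [mem_filter, mem_univ, true_and]
        refine ⟨hjr, ?_, ?_⟩
        · intro h0
          have := hpairs j.rev
          rw [Fin.rev_rev] at this
          exact hc.2 (by linarith)
        · intro h1
          have := hpairs j.rev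
          rw [Fin.rev_rev] at this
          exact hc.1 (by linarith)
      rw [hF] at this
      exact absurd this (Finset.notMem_empty j.rev)
  set y : Fin (2*n) → ℤ := fun j => if x j = 1 then 1 else 0 with hy
  have hcast : (fun j => ((y j : ℤ) : ℝ)) = x := by
    funext j
    rcases hbin j with h | h
    · have : ¬ (x j = 1) := by rw [h]; norm_num
      simp [hy, this, h]
    · simp [hy, h]
  have hyiso : Iso01 n y := by
    constructor
    · intro j
      by_cases h : x j = 1 <;> simp [hy, h]
    · intro j
      rcases hbin j with h | h
      · have hr : x j.rev = 1 := by have := hpairs j; linarith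
        have : ¬ (x j = 1) := by rw [h]; norm_num
        simp [hy, this, hr]
      · have hr : ¬ (x j.rev = 1) := by have := hpairs j; intro hc; linarith
        simp [hy, h, hr]
  have hycl : (zB n y : ZMod 2) = p := by
    by_contra hc
    have hc2 : (zB n y : ZMod 2) = p + 1 := two_zmod_cases _ _ hc
    set y' : Fin (2*n) → ℤ := fun j => 1 - y j with hy'
    have hy'iso : Iso01 n y' := compl_iso hyiso
    have hsum : zB n y' + zB n y = n := zB_add_compl hyiso
    have hsum2 : (zB n y' : ZMod 2) + (zB n y : ZMod 2) = (n : ZMod 2) := by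
      rw [← Nat.cast_add, hsum]
    have hy'cl : (zB n y' : ZMod 2) = q := by
      rw [hq]
      rw [hc2] at hsum2
      have haa : ∀ a : ZMod 2, a + a = 0 := by decide
      linear_combination hsum2 - haa p - haa 1
    have h1 := hineq y' ⟨hy'iso, hy'cl⟩
    have hzero : ∑ m, (y' m : ℝ) * x m = 0 := by
      apply Finset.sum_eq_zero
      intro m _
      rw [← hcast]
      simp only [hy']
      push_cast
      rcases hyiso.1 m with h | h <;> rw [h] <;> ring
    rw [hzero] at h1
    linarith
  exact ⟨y, ⟨hyiso, hycl⟩, hcast⟩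

/-- sum over Bf dominated below by three distinct elements -/
lemma three_le_sum {f : Fin (2*n) → ℝ} {k i j : Fin (2*n)}
    (hk : k ∈ Bf n) (hi : i ∈ Bf n) (hj : j ∈ Bf n)
    (hki : k ≠ i) (hkj : k ≠ j) (hij : i ≠ j)
    (hnn : ∀ m ∈ Bf n, 0 ≤ f m) :
    f k + f i + f j ≤ ∑ m ∈ Bf n, f m := by
  have hsub : ({k, i, j} : Finset (Fin (2*n))) ⊆ Bf n := by
    intro m hm
    simp only [Finset.mem_insert, Finset.mem_singleton] at hm
    rcases hm with rfl | rfl | rfl <;> assumption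
  have hsum : ∑ m ∈ ({k, i, j} : Finset (Fin (2*n))), f m = f k + f i + f j := by
    rw [Finset.sum_insert (by simp [hki, hkj]), Finset.sum_insert (by simp [hij]),
      Finset.sum_singleton]
    ring
  rw [← hsum]
  apply Finset.sum_le_sum_of_subset_of_nonneg hsub
  intro m hm _
  exact hnn m hm

/-- two distinct elements -/
lemma two_le_sum {f : Fin (2*n) → ℝ} {i j : Fin (2*n)}
    (hi : i ∈ Bf n) (hj : j ∈ Bf n) (hij : i ≠ j)
    (hnn : ∀ m ∈ Bf n, 0 ≤ f m) :
    f i + f j ≤ ∑ m ∈ Bf n, f m := by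
  have hsub : ({i, j} : Finset (Fin (2*n))) ⊆ Bf n := by
    intro m hm
    simp only [Finset.mem_insert, Finset.mem_singleton] at hm
    rcases hm with rfl | rfl <;> assumption
  have hsum : ∑ m ∈ ({i, j} : Finset (Fin (2*n))), f m = f i + f j := by
    rw [Finset.sum_insert (by simp [hij]), Finset.sum_singleton]
  rw [← hsum]
  apply Finset.sum_le_sum_of_subset_of_nonneg hsub
  intro m hm _
  exact hnn m hm


lemma frac1 (hn : 0 < n) {q : ZMod 2} {x : Fin (2*n) → ℝ} (hx : x ∈ Pset n hn q)
    (h1 : (fracSet n x).card = 1) : False := by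
  classical
  obtain ⟨hXR, hbd, hanch, hineq⟩ := hx
  have hpairs := pair_vals hn hXR hanch
  obtain ⟨i, hi⟩ := Finset.card_eq_one.mp h1
  have hiF : i ∈ fracSet n x := by rw [hi]; exact Finset.mem_singleton_self i
  obtain ⟨hiB, hi0, hi1⟩ := Finset.mem_filter.mp hiF
  have hiBn : (i:ℕ) < n := by
    have := hiB; unfold Bf at this
    simpa using this
  set g : ℤ → Fin (2*n) → ℤ := fun c j =>
    if (j:ℕ) < n then (if j = i then c else (if x j = 0 then 1 else 0))
    else (1 - (if j.rev = i then c else (if x j.rev = 0 then 1 else 0))) with hg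
  have hgB : ∀ c (j : Fin (2*n)), (j:ℕ) < n →
      g c j = if j = i then c else (if x j = 0 then 1 else 0) := by
    intro c j hj
    simp only [hg, if_pos hj]
  have hgRev : ∀ c (j : Fin (2*n)), (j:ℕ) < n → g c j.rev = 1 - g c j := by
    intro c j hj
    have hjr : ¬ ((j.rev : Fin (2*n)) : ℕ) < n := fun h => (rev_lt_iff j).mp h hj
    simp only [hg, if_neg hjr, Fin.rev_rev, if_pos hj]
  have hgiso : ∀ c : ℤ, c = 0 ∨ c = 1 → Iso01 n (g c) := by
    intro c hc01
    constructor
    · intro j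
      by_cases hj : (j:ℕ) < n
      · rw [hgB c j hj]
        split_ifs <;> omega
      · have hjr : ((j.rev : Fin (2*n)) : ℕ) < n := (rev_lt_iff j).mpr hj
        have : g c j = 1 - g c j.rev := by
          have := hgRev c j.rev hjr
          rw [Fin.rev_rev] at this
          omega
        rw [this, hgB c j.rev hjr]
        split_ifs <;> omega
    · intro j
      by_cases hj : (j:ℕ) < n
      · rw [hgRev c j hj]; ring
      · have hjr : ((j.rev : Fin (2*n)) : ℕ) < n := (rev_lt_iff j).mpr hj
        have := hgRev c j.rev hjr
        rw [Fin.rev_rev] at this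
        omega
  have hval : ∀ c : ℤ, c = 0 ∨ c = 1 →
      valx n x (g c) = realc x (g c) i := by
    intro c hc01
    rw [valx_eq_sum_realc hpairs (hgiso c hc01)]
    apply Finset.sum_eq_single_of_mem i hiB
    intro k hkB hki
    have hkBn : (k:ℕ) < n := by
      have := hkB; unfold Bf at this; simpa using this
    have hknF : k ∉ fracSet n x := by
      rw [hi]; simpa using hki
    have hbin : x k = 0 ∨ x k = 1 := by
      by_contra hc
      push_neg at hc
      exact hknF (by
        unfold fracSet
        rw [Finset.mem_filter]
        exact ⟨hkB, hc.1, hc.2⟩)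
    rcases hbin with h0 | hone
    · have : g c k = 1 := by rw [hgB c k hkBn, if_neg hki, if_pos h0]
      rw [realc_of_one this, h0]
    · have hne0 : ¬ (x k = 0) := by rw [hone]; norm_num
      have : g c k = 0 := by rw [hgB c k hkBn, if_neg hki, if_neg hne0]
      rw [realc_of_zero this, hone]
      ring
  have hgi : ∀ c : ℤ, g c i = c := by
    intro c
    rw [hgB c i hiBn, if_pos rfl]
  -- zB relation
  have hzb : zB n (g 0) = zB n (g 1) + 1 := by
    have hset : (univ.filter fun j : Fin (2*n) => (j:ℕ) < n ∧ g 0 j = 0)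
        = insert i (univ.filter fun j : Fin (2*n) => (j:ℕ) < n ∧ g 1 j = 0) := by
      ext j
      simp only [mem_filter, Finset.mem_insert, mem_univ, true_and]
      constructor
      · rintro ⟨hj, hj0⟩
        by_cases hji : j = i
        · exact Or.inl hji
        · refine Or.inr ⟨hj, ?_⟩
          rw [hgB 1 j hj, if_neg hji]
          rw [hgB 0 j hj, if_neg hji] at hj0
          exact hj0
      · rintro (rfl | ⟨hj, hj0⟩)
        · exact ⟨hiBn, hgi 0⟩
        · by_cases hji : j = i
          · subst hji
            rw [hgi 1] at hj0
            omega
          · refine ⟨hj, ?_⟩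
            rw [hgB 0 j hj, if_neg hji]
            rw [hgB 1 j hj, if_neg hji] at hj0
            exact hj0
    have hnotmem : i ∉ (univ.filter fun j : Fin (2*n) => (j:ℕ) < n ∧ g 1 j = 0) := by
      simp only [mem_filter, mem_univ, true_and, not_and]
      intro _
      rw [hgi 1]
      omega
    unfold zB
    rw [hset, Finset.card_insert_of_notMem hnotmem]
  -- choose the class
  have hchoice : ∃ c : ℤ, (c = 0 ∨ c = 1) ∧ g c ∈ Ocl n q := by
    by_cases hcl : (zB n (g 0) : ZMod 2) = q
    · exact ⟨0, Or.inl rfl, ⟨hgiso 0 (Or.inl rfl), hcl⟩⟩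
    · refine ⟨1, Or.inr rfl, ⟨hgiso 1 (Or.inr rfl), ?_⟩⟩
      have h2 : (zB n (g 0) : ZMod 2) = q + 1 := two_zmod_cases _ _ hcl
      have h3 : (zB n (g 0) : ZMod 2) = (zB n (g 1) : ZMod 2) + 1 := by
        rw [hzb]; push_cast; ring
      have := h3.symm.trans h2
      exact add_right_cancel this
  obtain ⟨c, hc01, hOcl⟩ := hchoice
  have hle := hineq (g c) hOcl
  have hvv : valx n x (g c) = realc x (g c) i := hval c hc01
  have hxi0 : 0 < x i := lt_of_le_of_ne (hbd i).1 (Ne.symm hi0)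
  have hxi1 : x i < 1 := lt_of_le_of_ne (hbd i).2 hi1
  have : valx n x (g c) < 1 := by
    rw [hvv]
    rcases hc01 with rfl | rfl
    · rw [realc_of_zero (hgi 0)]; linarith
    · rw [realc_of_one (hgi 1)]; linarith
  unfold valx at this
  linarith


lemma castrev {y : Fin (2*n) → ℤ} (hy : Iso01 n y) (k : Fin (2*n)) :
    ((y k.rev : ℤ) : ℝ) = 1 - (y k : ℝ) := by
  have h : (y k : ℝ) + (y k.rev : ℝ) = 1 := by exact_mod_cast hy.2 k
  linarith

lemma tight_int {q : ZMod 2} {x : Fin (2*n) → ℝ}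
    (hbd : ∀ k, 0 ≤ x k ∧ x k ≤ 1) (hpairs : ∀ k : Fin (2*n), x k + x k.rev = 1)
    {i j : Fin (2*n)} (hiF : i ∈ fracSet n x) (hjF : j ∈ fracSet n x) (hij : i ≠ j)
    {y' : Fin (2*n) → ℤ} (hy' : y' ∈ Ocl n q) (ht : valx n x y' = 1) :
    ∀ k ∈ Bf n, k ∉ fracSet n x → ((x k = 0 ∧ y' k = 1) ∨ (x k = 1 ∧ y' k = 0)) := by
  intro k hkB hkF
  have hiB : i ∈ Bf n := (Finset.mem_filter.mp hiF).1
  have hjB : j ∈ Bf n := (Finset.mem_filter.mp hjF).1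
  have hki : k ≠ i := fun h => hkF (h ▸ hiF)
  have hkj : k ≠ j := fun h => hkF (h ▸ hjF)
  have hbin : x k = 0 ∨ x k = 1 := by
    by_contra hc
    push_neg at hc
    exact hkF (Finset.mem_filter.mpr ⟨hkB, hc.1, hc.2⟩)
  have hsum := (valx_eq_sum_realc hpairs hy'.1).symm.trans ht
  have hover : realc x y' k = 1 → False := by
    intro h1
    have h3 := three_le_sum hkB hiB hjB hki hkj hij
      (fun m _ => realc_nonneg hbd hy'.1 m)
    have hpi := realc_frac_pos hbd hy'.1 hiF
    have hpj := realc_frac_pos hbd hy'.1 hjF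
    rw [hsum] at h3
    rw [h1] at h3
    linarith
  rcases hbin with h0 | h1
  · left
    refine ⟨h0, ?_⟩
    rcases hy'.1.1 k with hz | ho
    · exfalso
      apply hover
      rw [realc_of_zero hz, h0]
      ring
    · exact ho
  · right
    refine ⟨h1, ?_⟩
    rcases hy'.1.1 k with hz | ho
    · exact hz
    · exfalso
      apply hover
      rw [realc_of_one ho, h1]

lemma tight_fracsum {q : ZMod 2} {x : Fin (2*n) → ℝ}
    (hbd : ∀ k, 0 ≤ x k ∧ x k ≤ 1) (hpairs : ∀ k : Fin (2*n), x k + x k.rev = 1)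
    {i j : Fin (2*n)} (hiF : i ∈ fracSet n x) (hjF : j ∈ fracSet n x) (hij : i ≠ j)
    {y' : Fin (2*n) → ℤ} (hy' : y' ∈ Ocl n q) (ht : valx n x y' = 1) :
    ∑ k ∈ fracSet n x, realc x y' k = 1 := by
  have hFB : fracSet n x ⊆ Bf n := Finset.filter_subset _ _
  have hsd := Finset.sum_sdiff (f := realc x y') hFB
  have hzero : ∑ k ∈ Bf n \ fracSet n x, realc x y' k = 0 := by
    apply Finset.sum_eq_zero
    intro k hk
    obtain ⟨hkB, hkF⟩ := Finset.mem_sdiff.mp hk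
    rcases tight_int hbd hpairs hiF hjF hij hy' ht k hkB hkF with ⟨h0, h1⟩ | ⟨h0, h1⟩
    · rw [realc_of_one h1, h0]
    · rw [realc_of_zero h1, h0]; ring
  have := (valx_eq_sum_realc hpairs hy'.1).symm.trans ht
  linarith [hsd, hzero, this]

lemma tight_char {q : ZMod 2} {x : Fin (2*n) → ℝ}
    (hbd : ∀ k, 0 ≤ x k ∧ x k ≤ 1) (hpairs : ∀ k : Fin (2*n), x k + x k.rev = 1)
    {i j : Fin (2*n)} (hiF : i ∈ fracSet n x) (hjF : j ∈ fracSet n x) (hij : i ≠ j)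
    {y0 y1 : Fin (2*n) → ℤ} (hy0 : y0 ∈ Ocl n q) (ht0 : valx n x y0 = 1)
    (hy1 : y1 ∈ Ocl n q) (ht1 : valx n x y1 = 1) :
    (y1 i = y0 i ∧ y1 j = y0 j) ∨ (y1 i + y0 i = 1 ∧ y1 j + y0 j = 1) := by
  classical
  set D : Finset (Fin (2*n)) := (fracSet n x).filter (fun k => ¬ (y0 k = y1 k)) with hD
  have hDsub : D ⊆ fracSet n x := Finset.filter_subset _ _
  -- D is the full difference set in the first half
  have hDeq : (univ.filter fun k : Fin (2*n) => (k:ℕ) < n ∧ y0 k ≠ y1 k) = D := by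
    ext k
    simp only [hD, mem_filter, mem_univ, true_and]
    constructor
    · rintro ⟨hk, hne⟩
      have hkB : k ∈ Bf n := by unfold Bf; simp only [mem_filter, mem_univ, true_and]; exact hk
      refine ⟨?_, hne⟩
      by_contra hkF
      rcases tight_int hbd hpairs hiF hjF hij hy0 ht0 k hkB hkF with ⟨h0, h1⟩ | ⟨h0, h1⟩ <;>
        rcases tight_int hbd hpairs hiF hjF hij hy1 ht1 k hkB hkF with ⟨h0', h1'⟩ | ⟨h0', h1'⟩
      · exact hne (h1.trans h1'.symm)
      · rw [h0] at h0'; norm_num at h0'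
      · rw [h0] at h0'; norm_num at h0'
      · exact hne (h1.trans h1'.symm)
    · rintro ⟨hkF, hne⟩
      have hkB := Finset.mem_filter.mp (Finset.filter_subset _ _ hkF)
      refine ⟨?_, hne⟩
      have := hkB.2
      unfold fracSet at hkF
      have := (Finset.mem_filter.mp hkF).1
      unfold Bf at this
      simpa using this
  have hDeven : Even D.card := by
    rw [← hDeq]
    have hpar := diff_parity hy0.1 hy1.1
    rw [hy0.2, hy1.2] at hpar
    have hzero : ((univ.filter fun k : Fin (2*n) => (k:ℕ) < n ∧ y0 k ≠ y1 k).card : ZMod 2)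
        = 0 := by
      rw [hpar]
      have : ∀ a : ZMod 2, a + a = 0 := by decide
      exact this q
    rw [even_iff_two_dvd]
    rwa [ZMod.natCast_eq_zero_iff] at hzero
  -- sums
  have hs0 : ∑ k ∈ fracSet n x \ D, realc x y0 k + ∑ k ∈ D, realc x y0 k = 1 := by
    rw [Finset.sum_sdiff hDsub]
    exact tight_fracsum hbd hpairs hiF hjF hij hy0 ht0
  have hs1 : ∑ k ∈ fracSet n x \ D, realc x y1 k + ∑ k ∈ D, realc x y1 k = 1 := by
    rw [Finset.sum_sdiff hDsub]
    exact tight_fracsum hbd hpairs hiF hjF hij hy1 ht1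
  have he3 : ∑ k ∈ fracSet n x \ D, realc x y1 k = ∑ k ∈ fracSet n x \ D, realc x y0 k := by
    apply Finset.sum_congr rfl
    intro k hk
    obtain ⟨hkF, hkD⟩ := Finset.mem_sdiff.mp hk
    have heq : y0 k = y1 k := by
      by_contra hne
      exact hkD (Finset.mem_filter.mpr ⟨hkF, hne⟩)
    unfold realc
    rw [heq]
  have he4 : ∑ k ∈ D, realc x y1 k = (D.card : ℝ) - ∑ k ∈ D, realc x y0 k := by
    have : ∀ k ∈ D, realc x y1 k = 1 - realc x y0 k := by
      intro k hk
      obtain ⟨hkF, hne⟩ := Finset.mem_filter.mp hk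
      have h01a := hy0.1.1 k
      have h01b := hy1.1.1 k
      have hflip : y1 k = 1 - y0 k := by omega
      have hcast : (y1 k : ℝ) = 1 - (y0 k : ℝ) := by
        rw [hflip]; push_cast; ring
      unfold realc
      rw [hcast]
      ring
    rw [Finset.sum_congr rfl this, Finset.sum_sub_distrib, Finset.sum_const,
      nsmul_eq_mul, mul_one]
  have hnn : 0 ≤ ∑ k ∈ fracSet n x \ D, realc x y0 k :=
    Finset.sum_nonneg fun k hk =>
      realc_nonneg hbd hy0.1 k
  have hkey : (D.card : ℝ) + 2 * ∑ k ∈ fracSet n x \ D, realc x y0 k = 2 := by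
    rw [he3, he4] at hs1
    linarith
  have hD2 : D.card ≤ 2 := by
    have : (D.card : ℝ) ≤ 2 := by linarith
    exact_mod_cast this
  have hD02 : D.card = 0 ∨ D.card = 2 := by
    rcases hDeven with ⟨t, ht⟩
    omega
  rcases hD02 with h0 | h2
  · left
    have hDempty : D = ∅ := Finset.card_eq_zero.mp h0
    constructor
    · have : i ∉ D := by rw [hDempty]; exact Finset.notMem_empty i
      by_contra hne
      exact this (Finset.mem_filter.mpr ⟨hiF, fun h => hne h.symm⟩)
    · have : j ∉ D := by rw [hDempty]; exact Finset.notMem_empty j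
      by_contra hne
      exact this (Finset.mem_filter.mpr ⟨hjF, fun h => hne h.symm⟩)
  · right
    have hrest : ∑ k ∈ fracSet n x \ D, realc x y0 k = 0 := by
      have : (D.card : ℝ) = 2 := by exact_mod_cast h2
      linarith
    have hempty : fracSet n x \ D = ∅ := by
      by_contra hne
      obtain ⟨k, hk⟩ := Finset.nonempty_of_ne_empty hne
      have hkF : k ∈ fracSet n x := (Finset.mem_sdiff.mp hk).1
      have hpos := realc_frac_pos hbd hy0.1 hkF
      have hle : realc x y0 k ≤ ∑ m ∈ fracSet n x \ D, realc x y0 m :=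
        Finset.single_le_sum (fun m _ => realc_nonneg hbd hy0.1 m) hk
      linarith
    have hsubF : fracSet n x ⊆ D := by
      rwa [Finset.sdiff_eq_empty_iff_subset] at hempty
    have hiD : i ∈ D := hsubF hiF
    have hjD : j ∈ D := hsubF hjF
    have hine := (Finset.mem_filter.mp hiD).2
    have hjne := (Finset.mem_filter.mp hjD).2
    have h01a := hy0.1.1 i
    have h01b := hy1.1.1 i
    have h01c := hy0.1.1 j
    have h01d := hy1.1.1 j
    exact ⟨by omega, by omega⟩


lemma pert (hn : 0 < n) {q : ZMod 2} {x : Fin (2*n) → ℝ} (hx : x ∈ Pset n hn q)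
    (h2 : 2 ≤ (fracSet n x).card) :
    ∃ x₁ x₂, x₁ ∈ Pset n hn q ∧ x₂ ∈ Pset n hn q ∧ x ∈ openSegment ℝ x₁ x₂ ∧ x₁ ≠ x := by
  classical
  obtain ⟨hXR, hbd, hanch, hineq⟩ := hx
  have hpairs := pair_vals hn hXR hanch
  obtain ⟨i, hiF⟩ := Finset.card_pos.mp (show 0 < (fracSet n x).card by omega)
  obtain ⟨j, hjF'⟩ := Finset.card_pos.mp
    (show 0 < ((fracSet n x).erase i).card by rw [Finset.card_erase_of_mem hiF]; omega)
  have hji : j ≠ i := (Finset.mem_erase.mp hjF').1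
  have hij : i ≠ j := hji.symm
  have hjF : j ∈ fracSet n x := (Finset.mem_erase.mp hjF').2
  obtain ⟨hiB, hi0, hi1⟩ := Finset.mem_filter.mp hiF
  obtain ⟨hjB, hj0, hj1⟩ := Finset.mem_filter.mp hjF
  have hiBn : (i:ℕ) < n := by have := hiB; unfold Bf at this; simpa using this
  have hjBn : (j:ℕ) < n := by have := hjB; unfold Bf at this; simpa using this
  have hirn : ¬ ((i.rev : Fin (2*n)) : ℕ) < n := fun h => (rev_lt_iff i).mp h hiBn
  have hjrn : ¬ ((j.rev : Fin (2*n)) : ℕ) < n := fun h => (rev_lt_iff j).mp h hjBn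
  have hBout : ∀ a b : Fin (2*n), (a:ℕ) < n → ¬ ((b:ℕ) < n) → a ≠ b := by
    intro a b ha hb h
    rw [h] at ha
    exact hb ha
  have hiir : i ≠ i.rev := hBout i i.rev hiBn hirn
  have hijr : i ≠ j.rev := hBout i j.rev hiBn hjrn
  have hjjr : j ≠ j.rev := hBout j j.rev hjBn hjrn
  have hjir : j ≠ i.rev := hBout j i.rev hjBn hirn
  have hirjr : i.rev ≠ j.rev := fun h => hij (Fin.rev_inj.mp h)
  have hxi0 : 0 < x i := lt_of_le_of_ne (hbd i).1 (Ne.symm hi0)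
  have hxi1 : x i < 1 := lt_of_le_of_ne (hbd i).2 hi1
  have hxj0 : 0 < x j := lt_of_le_of_ne (hbd j).1 (Ne.symm hj0)
  have hxj1 : x j < 1 := lt_of_le_of_ne (hbd j).2 hj1
  -- the direction sign
  obtain ⟨η, hη, hΔ0⟩ : ∃ η : ℝ, (η = 1 ∨ η = -1) ∧
      ∀ y', y' ∈ Ocl n q → valx n x y' = 1 →
        ((y' i : ℝ) - (y' i.rev : ℝ)) + η * ((y' j : ℝ) - (y' j.rev : ℝ)) = 0 := by
    by_cases hT : ∃ y0, y0 ∈ Ocl n q ∧ valx n x y0 = 1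
    · obtain ⟨y0, hy0, ht0⟩ := hT
      refine ⟨-(2*(y0 i : ℝ)-1)*(2*(y0 j : ℝ)-1), ?_, ?_⟩
      · rcases hy0.1.1 i with h | h <;> rcases hy0.1.1 j with h' | h' <;>
          rw [h, h'] <;> push_cast <;> norm_num
      · intro y' hy' ht'
        rw [castrev hy'.1 i, castrev hy'.1 j]
        rcases tight_char hbd hpairs hiF hjF hij hy0 ht0 hy' ht' with ⟨e1, e2⟩ | ⟨e1, e2⟩
        · have c1 : (y' i : ℝ) = (y0 i : ℝ) := by exact_mod_cast e1
          have c2 : (y' j : ℝ) = (y0 j : ℝ) := by exact_mod_cast e2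
          rw [c1, c2]
          rcases hy0.1.1 i with h | h <;> rcases hy0.1.1 j with h' | h' <;>
            rw [h, h'] <;> push_cast <;> ring
        · have c1 : (y' i : ℝ) = 1 - (y0 i : ℝ) := by
            have h' : (y' i : ℝ) + (y0 i : ℝ) = 1 := by exact_mod_cast e1
            linarith
          have c2 : (y' j : ℝ) = 1 - (y0 j : ℝ) := by
            have h' : (y' j : ℝ) + (y0 j : ℝ) = 1 := by exact_mod_cast e2
            linarith
          rw [c1, c2]
          rcases hy0.1.1 i with h | h <;> rcases hy0.1.1 j with h' | h' <;>
            rw [h, h'] <;> push_cast <;> ring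
    · refine ⟨1, Or.inl rfl, ?_⟩
      intro y' hy' ht'
      exact absurd ⟨y', hy', ht'⟩ hT
  -- slack
  set Fns : Finset (Fin (2*n) → ℤ) := ((Ocl_finite (n := n) q).toFinset.filter
      (fun y' => valx n x y' ≠ 1)) with hFns
  set Vs : Finset ℝ := Fns.image (fun y' => valx n x y') with hVs
  set δs : ℝ := if h : Vs.Nonempty then (Vs.min' h - 1)/2 else 1 with hδs
  have hδs_pos : 0 < δs := by
    rw [hδs]
    split
    · next h =>
      have hall : ∀ v ∈ Vs, (1:ℝ) < v := by
        intro v hv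
        simp only [hVs, Finset.mem_image, hFns, Finset.mem_filter,
          Set.Finite.mem_toFinset] at hv
        obtain ⟨y', ⟨hyO, hne⟩, rfl⟩ := hv
        have hge := hineq y' hyO
        exact lt_of_le_of_ne (by unfold valx; exact hge) (Ne.symm hne)
      have := hall _ (Vs.min'_mem h)
      linarith
    · norm_num
  have hδs_prop : ∀ y', y' ∈ Ocl n q → valx n x y' ≠ 1 → 1 + 2*δs ≤ valx n x y' := by
    intro y' hyO hne
    have hyF : y' ∈ Fns := by
      simp only [hFns, Finset.mem_filter, Set.Finite.mem_toFinset]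
      exact ⟨hyO, hne⟩
    have hvmem : valx n x y' ∈ Vs := by
      rw [hVs]; exact Finset.mem_image_of_mem _ hyF
    have hVne : Vs.Nonempty := ⟨_, hvmem⟩
    have hmin := Vs.min'_le _ hvmem
    rw [hδs, dif_pos hVne]
    linarith
  set δ : ℝ := min (min (x i) (1 - x i)) (min (min (x j) (1 - x j)) δs) with hδ
  have hδpos : 0 < δ := by
    rw [hδ]
    apply lt_min (lt_min hxi0 (by linarith))
    exact lt_min (lt_min hxj0 (by linarith)) hδs_pos
  have hδxi : δ ≤ x i := le_trans (min_le_left _ _) (min_le_left _ _)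
  have hδxi' : δ ≤ 1 - x i := le_trans (min_le_left _ _) (min_le_right _ _)
  have hδxj : δ ≤ x j := le_trans (min_le_right _ _) (le_trans (min_le_left _ _) (min_le_left _ _))
  have hδxj' : δ ≤ 1 - x j := le_trans (min_le_right _ _) (le_trans (min_le_left _ _) (min_le_right _ _))
  have hδδs : δ ≤ δs := le_trans (min_le_right _ _) (min_le_right _ _)
  -- direction
  set d : Fin (2*n) → ℝ := fun m =>
    (if m = i then (1:ℝ) else 0) - (if m = i.rev then 1 else 0)
      + η * ((if m = j then 1 else 0) - (if m = j.rev then 1 else 0)) with hd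
  have hdi : d i = 1 := by
    rw [hd]
    simp only [if_pos rfl, if_neg hiir, if_neg hij, if_neg hijr]
    norm_num
  have hdir : d i.rev = -1 := by
    rw [hd]
    simp only [if_pos rfl, if_neg (Ne.symm hiir), if_neg hjir.symm, if_neg hirjr]
    norm_num
  have hdj : d j = η := by
    rw [hd]
    simp only [if_pos rfl, if_neg hji, if_neg hjir, if_neg hjjr]
    norm_num
  have hdjr : d j.rev = -η := by
    rw [hd]
    simp only [if_pos rfl, if_neg (Ne.symm hijr), if_neg (Ne.symm hirjr), if_neg (Ne.symm hjjr)]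
    norm_num
  have hd0 : ∀ m : Fin (2*n), m ≠ i → m ≠ i.rev → m ≠ j → m ≠ j.rev → d m = 0 := by
    intro m h1 h2 h3 h4
    rw [hd]
    simp only [if_neg h1, if_neg h2, if_neg h3, if_neg h4]
    ring
  have hrevswap : ∀ (a m : Fin (2*n)), (if m.rev = a.rev then (1:ℝ) else 0) = (if m = a then 1 else 0) :=
    fun a m => if_congr Fin.rev_inj rfl rfl
  have hrevswap2 : ∀ (a m : Fin (2*n)), (if m.rev = a then (1:ℝ) else 0) = (if m = a.rev then 1 else 0) :=
    fun a m => if_congr ⟨fun h => by rw [← h, Fin.rev_rev], fun h => by rw [h, Fin.rev_rev]⟩ rfl rfl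
  have hdpair : ∀ m : Fin (2*n), d m + d m.rev = 0 := by
    intro m
    rw [hd]
    simp only
    rw [hrevswap2 i m, hrevswap i m, hrevswap2 j m, hrevswap j m]
    ring
  -- indicator sums
  have hind : ∀ (f : Fin (2*n) → ℝ) (a : Fin (2*n)),
      ∑ m, f m * (if m = a then 1 else 0) = f a := by
    intro f a
    rw [Finset.sum_eq_single a]
    · simp
    · intro b _ hb; simp [hb]
    · intro h; exact absurd (Finset.mem_univ a) h
  have hsum_d : ∀ y' : Fin (2*n) → ℤ, ∑ m, (y' m : ℝ) * d m
      = ((y' i : ℝ) - (y' i.rev : ℝ)) + η * ((y' j : ℝ) - (y' j.rev : ℝ)) := by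
    intro y'
    have hterm : ∀ m, (y' m : ℝ) * d m
        = (y' m : ℝ) * (if m = i then 1 else 0) - (y' m : ℝ) * (if m = i.rev then 1 else 0)
          + ((fun m => η * (y' m : ℝ)) m * (if m = j then 1 else 0)
            - (fun m => η * (y' m : ℝ)) m * (if m = j.rev then 1 else 0)) := by
      intro m
      rw [hd]
      simp only
      ring
    rw [Finset.sum_congr rfl (fun m _ => hterm m), Finset.sum_add_distrib,
      Finset.sum_sub_distrib, Finset.sum_sub_distrib,
      hind (fun m => ((y' m : ℤ) : ℝ)) i, hind (fun m => ((y' m : ℤ) : ℝ)) i.rev,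
      hind (fun m => η * ((y' m : ℤ) : ℝ)) j, hind (fun m => η * ((y' m : ℤ) : ℝ)) j.rev]
    ring
  -- feasibility of perturbations
  have hfeas : ∀ ε : ℝ, -δ ≤ ε → ε ≤ δ → (fun m => x m + ε * d m) ∈ Pset n hn q := by
    intro ε hε1 hε2
    refine ⟨?_, ?_, ?_, ?_⟩
    · intro a b
      simp only
      have ha := hdpair a
      have hb := hdpair b
      have ha' := hpairs a
      have hb' := hpairs b
      linear_combination ε * ha - ε * hb + ha' - hb'
    · intro m
      simp only
      rcases eq_or_ne m i with rfl | h1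
      · rw [hdi]
        constructor <;> linarith
      rcases eq_or_ne m i.rev with rfl | h2
      · rw [hdir]
        have : x i.rev = 1 - x i := by have := hpairs i; linarith
        rw [this]
        constructor <;> linarith
      rcases eq_or_ne m j with rfl | h3
      · rw [hdj]
        rcases hη with rfl | rfl
        · constructor <;> linarith
        · constructor <;> linarith
      rcases eq_or_ne m j.rev with rfl | h4
      · rw [hdjr]
        have : x j.rev = 1 - x j := by have := hpairs j; linarith
        rw [this]
        rcases hη with rfl | rfl
        · constructor <;> linarith
        · constructor <;> linarith
      · rw [hd0 m h1 h2 h3 h4]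
        have := hbd m
        constructor <;> [linarith [this.1]; linarith [this.2]]
    · simp only
      have hdz := hdpair ⟨0, by omega⟩
      rw [rev_zero_eq hn] at hdz
      linear_combination hanch + ε * hdz
    · intro y' hy'
      have hsplit : ∑ m, (y' m : ℝ) * (x m + ε * d m)
          = valx n x y' + ε * ∑ m, (y' m : ℝ) * d m := by
        unfold valx
        rw [Finset.mul_sum, ← Finset.sum_add_distrib]
        apply Finset.sum_congr rfl
        intro m _
        ring
      have hy'ge : (1:ℝ) ≤ valx n x y' := hineq y' hy'
      show (1:ℝ) ≤ ∑ m, (y' m : ℝ) * ((fun m => x m + ε * d m) m)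
      simp only
      rw [hsplit, hsum_d y']
      by_cases ht : valx n x y' = 1
      · rw [ht, hΔ0 y' hy' ht, mul_zero, add_zero]
      · have hsl := hδs_prop y' hy' ht
        have hbound : -2 ≤ ((y' i : ℝ) - (y' i.rev : ℝ)) + η * ((y' j : ℝ) - (y' j.rev : ℝ)) ∧
            ((y' i : ℝ) - (y' i.rev : ℝ)) + η * ((y' j : ℝ) - (y' j.rev : ℝ)) ≤ 2 := by
          rw [castrev hy'.1 i, castrev hy'.1 j]
          rcases hy'.1.1 i with e | e <;> rcases hy'.1.1 j with e' | e' <;>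
            rw [e, e'] <;> rcases hη with rfl | rfl <;> push_cast <;> norm_num
        set Δ := ((y' i : ℝ) - (y' i.rev : ℝ)) + η * ((y' j : ℝ) - (y' j.rev : ℝ)) with hΔdef
        have hprod : -(2*δ) ≤ ε * Δ := by
          nlinarith [mul_nonneg (sub_nonneg.mpr hε2) (sub_nonneg.mpr hbound.1),
            mul_nonneg (sub_nonneg.mpr (show -δ ≤ ε from hε1)) (sub_nonneg.mpr hbound.2),
            mul_nonneg (sub_nonneg.mpr hε2) (sub_nonneg.mpr hbound.2),
            mul_nonneg (sub_nonneg.mpr (show -δ ≤ ε from hε1)) (sub_nonneg.mpr hbound.1)]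
        linarith
  refine ⟨fun m => x m + δ * d m, fun m => x m + (-δ) * d m,
    hfeas δ (by linarith) le_rfl, hfeas (-δ) le_rfl (by linarith), ?_, ?_⟩
  · refine ⟨1/2, 1/2, by norm_num, by norm_num, by norm_num, ?_⟩
    funext m
    simp only [Pi.add_apply, Pi.smul_apply, smul_eq_mul]
    ring
  · intro hcon
    have := congrFun hcon i
    rw [hdi] at this
    have : δ = 0 := by linarith
    linarith


lemma ext_subset (hn : 0 < n) {p q : ZMod 2} (hq : q = p + (n : ZMod 2) + 1) :
    (Pset n hn q).extremePoints ℝ ⊆ Vcast n p := by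
  intro x hx
  obtain ⟨hxP, hxE⟩ := hx
  by_cases hF : fracSet n x = ∅
  · exact caseA hn hq hxP hF
  · exfalso
    have hcard : 1 ≤ (fracSet n x).card :=
      Finset.card_pos.mpr (Finset.nonempty_of_ne_empty hF)
    rcases eq_or_lt_of_le hcard with h1 | h2
    · exact frac1 hn hxP h1.symm
    · obtain ⟨x₁, x₂, hx₁, hx₂, hseg, hne⟩ := pert hn hxP (by omega)
      exact hne (hxE hx₁ hx₂ hseg)

theorem main_eq (hn : 0 < n) {p q : ZMod 2} (hq : q = p + (n : ZMod 2) + 1) :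
    convexHull ℝ (Vcast n p) = Pset n hn q := by
  apply Set.Subset.antisymm
  · exact convexHull_min (Vcast_subset_Pset hq hn) (Pset_convex hn q)
  · have hKM := closure_convexHull_extremePoints (Pset_isCompact hn q) (Pset_convex hn q)
    calc Pset n hn q = closure (convexHull ℝ ((Pset n hn q).extremePoints ℝ)) := hKM.symm
      _ ⊆ closure (convexHull ℝ (Vcast n p)) :=
          closure_mono (convexHull_mono (ext_subset hn hq))
      _ = convexHull ℝ (Vcast n p) :=
          IsClosed.closure_eq ((Vcast_finite p).isClosed_convexHull (𝕜 := ℝ))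

lemma orbit_real_eq (μ0 : Fin (2*n) → ℤ) (hμ0 : Iso01 n μ0) :
    {y : Fin (2*n) → ℝ | ∃ σ, inW0 n σ ∧ y = fun i => ((permAct n σ μ0 i : ℤ) : ℝ)}
      = Vcast n ((zB n μ0 : ZMod 2)) := by
  ext y
  constructor
  · rintro ⟨σ, hσ, rfl⟩
    refine ⟨permAct n σ μ0, ?_, rfl⟩
    have : permAct n σ μ0 ∈ {y : Fin (2*n) → ℤ | ∃ σ, inW0 n σ ∧ y = permAct n σ μ0} :=
      ⟨σ, hσ, rfl⟩
    rwa [orbit_eq μ0 hμ0] at this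
  · rintro ⟨z, hz, rfl⟩
    rw [← orbit_eq μ0 hμ0] at hz
    obtain ⟨σ, hσ, rfl⟩ := hz
    exact ⟨σ, hσ, rfl⟩

lemma forall_orbit_iff (μ0 : Fin (2*n) → ℤ) (hμ0 : Iso01 n μ0)
    (P : (Fin (2*n) → ℤ) → Prop) :
    (∀ σ, inW0 n σ → P (permAct n σ μ0)) ↔ (∀ y ∈ Ocl n ((zB n μ0 : ZMod 2)), P y) := by
  constructor
  · intro h y hy
    have hmem : y ∈ {y : Fin (2*n) → ℤ | ∃ σ, inW0 n σ ∧ y = permAct n σ μ0} := by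
      rw [orbit_eq μ0 hμ0]; exact hy
    obtain ⟨σ, hσ, rfl⟩ := hmem
    exact h σ hσ
  · intro h σ hσ
    apply h
    rw [← orbit_eq μ0 hμ0]
    exact ⟨σ, hσ, rfl⟩
lemma tau_eq (hn : 2 ≤ n) :
    tau n hn = Equiv.swap (⟨n-1, by omega⟩ : Fin (2*n))
      ((⟨n-1, by omega⟩ : Fin (2*n)).rev) := by
  unfold tau
  congr 1
  apply Fin.ext
  rw [Fin.val_rev]
  simp only
  omega

lemma permAct_tau_self (hn : 2 ≤ n) (y : Fin (2*n) → ℤ) :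
    permAct n (tau n hn) (permAct n (tau n hn) y) = y := by
  rw [← permAct_mul, tau_eq hn, Equiv.swap_mul_self, permAct_one]

lemma forall_orbit_tau_iff (hn : 2 ≤ n) (μ0 : Fin (2*n) → ℤ) (hμ0 : Iso01 n μ0)
    (P : (Fin (2*n) → ℤ) → Prop) :
    (∀ σ, inW0 n σ → P (permAct n (tau n hn * σ) μ0))
      ↔ (∀ y ∈ Ocl n ((zB n μ0 : ZMod 2) + 1), P y) := by
  have htsh : inSh n (tau n hn) := by rw [tau_eq hn]; exact inSh_swap_rev _
  have htsgn : sgn2 (tau n hn) = 1 := by rw [tau_eq hn]; exact sgn2_swap_rev _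
  have haa : ∀ a : ZMod 2, a + 1 + 1 = a := by decide
  constructor
  · intro h y hy
    obtain ⟨hyiso, hycl⟩ := hy
    set y' := permAct n (tau n hn) y with hy'
    have hy'iso : Iso01 n y' := Iso01_permAct htsh hyiso
    have hy'cl : (zB n y' : ZMod 2) = (zB n μ0 : ZMod 2) := by
      rw [hy', zB_sgn htsh hyiso, htsgn, hycl]
      exact haa _
    obtain ⟨σ, hσ, heq⟩ : ∃ σ, inW0 n σ ∧ y' = permAct n σ μ0 := by
      have hmem : y' ∈ Ocl n ((zB n μ0 : ZMod 2)) := ⟨hy'iso, hy'cl⟩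
      rwa [← orbit_eq μ0 hμ0] at hmem
    have hyy : y = permAct n (tau n hn * σ) μ0 := by
      rw [permAct_mul, ← heq, hy', permAct_tau_self hn]
    rw [hyy]
    exact h σ hσ
  · intro h σ hσ
    apply h
    constructor
    · exact Iso01_permAct (inSh_mul htsh hσ.1) hμ0
    · rw [zB_sgn (inSh_mul htsh hσ.1) hμ0, sgn2_mul, htsgn,
        (sgn2_eq_zero_iff σ).mpr hσ.2]
      ring

lemma mu1_iso (hn : 0 < n) : Iso01 n (mu1 n) := by
  constructor
  · intro j; unfold mu1; split_ifs <;> simp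
  · intro j
    unfold mu1
    by_cases h : (j:ℕ) < n
    · rw [if_pos h, if_neg (fun hc => (rev_lt_iff j).mp hc h)]
      norm_num
    · rw [if_neg h, if_pos ((rev_lt_iff j).mpr h)]
      ring

lemma mu2_iso (hn : 2 ≤ n) : Iso01 n (mu2 n) := by
  constructor
  · intro j; unfold mu2; split_ifs <;> simp
  · intro j
    unfold mu2
    have hrv : ((j.rev : Fin (2*n)) : ℕ) = 2*n - ((j:ℕ) + 1) := Fin.val_rev j
    have hj := j.isLt
    have hcond1 : ((j:ℕ) < n - 1 ∨ (j:ℕ) = n)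
        → ¬ (((j.rev : Fin (2*n)) : ℕ) < n - 1 ∨ ((j.rev : Fin (2*n)) : ℕ) = n) := by
      rw [hrv]; omega
    have hcond2 : ¬ ((j:ℕ) < n - 1 ∨ (j:ℕ) = n)
        → (((j.rev : Fin (2*n)) : ℕ) < n - 1 ∨ ((j.rev : Fin (2*n)) : ℕ) = n) := by
      rw [hrv]; omega
    by_cases h : ((j:ℕ) < n - 1 ∨ (j:ℕ) = n)
    · rw [if_pos h, if_neg (hcond1 h)]
      norm_num
    · rw [if_neg h, if_pos (hcond2 h)]
      ring



/-- Explicit description of the convex hull `Conv(W°μ)` for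
`μ ∈ {μ₁, μ₂}`, inside `V = X ⊗ ℝ`, with `c(x) = x_1 + x_{2n}`: for `n` odd it is cut
out by `0 ≤ x ≤ 1`, `c(x) = 1` and `μ'·x ≥ 1` for all `μ' ∈ W°μ`; for `n` even the same
with `μ'` ranging over `τW°μ`, where `τ = (n, n+1)`. -/
theorem convex_hull_description (n : ℕ) (hn : 2 ≤ n)
    (μ : Fin (2*n) → ℤ) (hμ : μ = mu1 n ∨ μ = mu2 n) :
    (Odd n →
      convexHull ℝ {y : Fin (2*n) → ℝ |
          ∃ σ, inW0 n σ ∧ y = fun i => (permAct n σ μ i : ℝ)} =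
        {x : Fin (2*n) → ℝ | inXR n x ∧ (∀ j, 0 ≤ x j ∧ x j ≤ 1) ∧
          x ⟨0, by omega⟩ + x ⟨2*n - 1, by omega⟩ = 1 ∧
          ∀ σ, inW0 n σ → 1 ≤ ∑ j, (permAct n σ μ j : ℝ) * x j}) ∧
    (Even n →
      convexHull ℝ {y : Fin (2*n) → ℝ |
          ∃ σ, inW0 n σ ∧ y = fun i => (permAct n σ μ i : ℝ)} =
        {x : Fin (2*n) → ℝ | inXR n x ∧ (∀ j, 0 ≤ x j ∧ x j ≤ 1) ∧
          x ⟨0, by omega⟩ + x ⟨2*n - 1, by omega⟩ = 1 ∧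
          ∀ σ, inW0 n σ → 1 ≤ ∑ j, (permAct n (tau n hn * σ) μ j : ℝ) * x j}) := by
  have hn0 : 0 < n := by omega
  have hiso : Iso01 n μ := by
    rcases hμ with rfl | rfl
    · exact mu1_iso hn0
    · exact mu2_iso hn
  constructor
  · intro hodd
    have hncast : (n : ZMod 2) = 1 := by
      obtain ⟨k, hk⟩ := hodd
      subst hk
      push_cast
      have h2 : (2 : ZMod 2) = 0 := rfl
      linear_combination (k : ZMod 2) * h2
    have hq : (zB n μ : ZMod 2) = (zB n μ : ZMod 2) + (n : ZMod 2) + 1 := by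
      rw [hncast]
      have haa : ∀ a : ZMod 2, a = a + 1 + 1 := by decide
      exact haa _
    rw [orbit_real_eq μ hiso, main_eq hn0 hq]
    ext x
    simp only [Pset, Set.mem_setOf_eq]
    exact and_congr_right fun _ => and_congr_right fun _ => and_congr_right fun _ =>
      (forall_orbit_iff μ hiso (fun y => 1 ≤ ∑ j, (y j : ℝ) * x j)).symm
  · intro heven
    have hncast : (n : ZMod 2) = 0 := by
      obtain ⟨k, hk⟩ := heven
      subst hk
      push_cast
      have h2 : (2 : ZMod 2) = 0 := rfl
      linear_combination (k : ZMod 2) * h2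
    have hq : (zB n μ : ZMod 2) + 1 = (zB n μ : ZMod 2) + (n : ZMod 2) + 1 := by
      rw [hncast, add_zero]
    rw [orbit_real_eq μ hiso, main_eq hn0 hq]
    ext x
    simp only [Pset, Set.mem_setOf_eq]
    exact and_congr_right fun _ => and_congr_right fun _ => and_congr_right fun _ =>
      (forall_orbit_tau_iff hn μ hiso (fun y => 1 ≤ ∑ j, (y j : ℝ) * x j)).symm


end OrthLM
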